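/- arXiv:2111.12240 — 6 statements merged into one kernel-verified Lean document; each statement's English description precedes it below -/
import Mathlib

section
/- Let G be a graph, S a subset of V(G), and v, w two distinct vertices not in S with vw an edge of G. Then v can perform a valid initial PSD force on w when the blue set is S ∪ {v} if and only if the edge vw is a bridge in the induced subgraph G − S. -/
open SimpleGraph Set

variable {V : Type*}

/-- The subgraph of `G` obtained by deleting the vertices of `B`
(kept as isolated vertices). -/
def delVerts (G : SimpleGraph V) (B : Set V) : SimpleGraph V where
  Adj a b := G.Adj a b ∧ a ∉ B ∧ b ∉ B
  symm := ⟨fun _ _ ⟨h, ha, hb⟩ => ⟨h.symm, hb, ha⟩⟩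
  loopless := ⟨fun a ⟨h, _, _⟩ => G.loopless.irrefl a h⟩

/-- `u` may PSD-force `w` when the set of blue vertices is `B`:  `u` is blue, `w` is a white
neighbor of `u`, and `w` is the unique white neighbor of `u` in the component of `G - B`
containing `w`. -/
def PSDForce (G : SimpleGraph V) (B : Set V) (u w : V) : Prop :=
  u ∈ B ∧ w ∉ B ∧ G.Adj u w ∧
    ∀ x, G.Adj u x → x ∉ B → (delVerts G B).Reachable x w → x = w

/-- One round of simultaneous PSD forcing starting from blue set `B`. -/
def psdStep (G : SimpleGraph V) (B : Set V) : Set V :=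
  B ∪ {w | ∃ u, PSDForce G B u w}

/-- `B` is a PSD forcing set of `G`. -/
def IsPSDForcingSet (G : SimpleGraph V) (B : Set V) : Prop :=
  ∃ t, (psdStep G)^[t] B = Set.univ

/-- The PSD propagation time `pt_+(G; B)` of the set `B` in `G`. -/
noncomputable def psdPropTime (G : SimpleGraph V) (B : Set V) : ℕ :=
  sInf {t | (psdStep G)^[t] B = Set.univ}

/-- The PSD zero forcing number `Z_+(G)`. -/
noncomputable def psdZ (G : SimpleGraph V) : ℕ :=
  sInf {k | ∃ B : Set V, IsPSDForcingSet G B ∧ B.ncard = k}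

/-- The `k`-PSD propagation time `pt_+(G, k)`: the minimum of `pt_+(G; B)` over
PSD forcing sets `B` of size `k`. -/
noncomputable def psdPt (G : SimpleGraph V) (k : ℕ) : ℕ :=
  sInf {t | ∃ B : Set V, IsPSDForcingSet G B ∧ B.ncard = k ∧ psdPropTime G B = t}

/-- The PSD propagation time `pt_+(G) = pt_+(G, Z_+(G))`. -/
noncomputable def psdPtG (G : SimpleGraph V) : ℕ := psdPt G (psdZ G)

/-- The PSD propagation time of `B` within the induced subgraph `G[U]` (for `B ⊆ U`),
realized by making the vertices outside `U` isolated and initially blue. -/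
noncomputable def psdPropTimeOn (G : SimpleGraph V) (U B : Set V) : ℕ :=
  psdPropTime (delVerts G Uᶜ) (B ∪ Uᶜ)

/-- The vertex set of the component of `G - B` containing the white vertex `w`. -/
def compOf (G : SimpleGraph V) (B : Set V) (w : V) : Set V :=
  {x | x ∉ B ∧ (delVerts G B).Reachable x w}


private lemma walk_avoid {G : SimpleGraph V} {S : Set V} {v : V}
    {H : SimpleGraph V} (hH : H ≤ delVerts G S) :
    ∀ {a b : V} (p : H.Walk a b), v ∉ p.support →
      (delVerts G (S ∪ {v})).Reachable a b := by
  intro a b p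
  induction p with
  | nil => exact fun _ => Reachable.refl _
  | @cons a c b h p ih =>
    intro hvs
    simp only [Walk.support_cons, List.mem_cons, not_or] at hvs
    obtain ⟨hva, hvp⟩ := hvs
    have h' := hH h
    have hvc : v ≠ c := fun e => hvp (e ▸ p.start_mem_support)
    refine (Adj.reachable ?_).trans (ih hvp)
    refine ⟨h'.1, ?_, ?_⟩ <;> simp only [Set.mem_union, Set.mem_singleton_iff, not_or]
    · exact ⟨h'.2.1, fun e => hva e.symm⟩
    · exact ⟨h'.2.2, fun e => hvc e.symm⟩

/-- `v → w` is a valid initial PSD force for `S ∪ {v}` iff `vw` is a bridge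
in `G - S`. -/
theorem stmt0 (G : SimpleGraph V) (S : Set V) (v w : V)
    (hv : v ∉ S) (hw : w ∉ S) (hvw : v ≠ w) (hadj : G.Adj v w) :
    PSDForce G (S ∪ {v}) v w ↔ (delVerts G S).IsBridge s(v, w) := by
  classical
  rw [isBridge_iff]
  have hle : delVerts G (S ∪ {v}) ≤ (delVerts G S) \ fromEdgeSet {s(v, w)} := by
    rintro a b ⟨hab, ha, hb⟩
    simp only [Set.mem_union, Set.mem_singleton_iff, not_or] at ha hb
    refine ⟨⟨hab, ha.1, hb.1⟩, ?_⟩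
    intro hF
    rw [fromEdgeSet_adj, Set.mem_singleton_iff, Sym2.eq_iff] at hF
    rcases hF.1 with ⟨rfl, rfl⟩ | ⟨rfl, rfl⟩
    · exact ha.2 rfl
    · exact hb.2 rfl
  constructor
  · rintro ⟨-, hwB, -, huniq⟩
    refine fun hr => ?_
    obtain ⟨p⟩ := hr
    obtain ⟨q, hq⟩ : ∃ q : ((delVerts G S) \ fromEdgeSet {s(v, w)}).Walk v w, q.IsPath :=
      ⟨p.toPath.1, p.toPath.2⟩
    cases q with
    | nil => exact hvw rfl
    | @cons _ x _ h q' =>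
      rw [Walk.cons_isPath_iff] at hq
      have hadjs := h.1
      have hxw : x ≠ w := by
        rintro rfl
        exact h.2 ⟨rfl, hvw⟩
      have hxB : x ∉ S ∪ {v} := by
        simp only [Set.mem_union, Set.mem_singleton_iff, not_or]
        exact ⟨hadjs.2.2, fun e => hadjs.1.ne' e⟩
      exact hxw (huniq x hadjs.1 hxB (walk_avoid sdiff_le q' hq.2))
  · intro hnr
    refine ⟨Or.inr rfl, ?_, hadj, ?_⟩
    · simp only [Set.mem_union, Set.mem_singleton_iff, not_or]
      exact ⟨hw, hvw.symm⟩
    · intro x hx hxB hreach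
      by_contra hxw
      apply hnr
      simp only [Set.mem_union, Set.mem_singleton_iff, not_or] at hxB
      have h1 : ((delVerts G S) \ fromEdgeSet {s(v, w)}).Adj v x := by
        refine ⟨⟨hx, hv, hxB.1⟩, ?_⟩
        intro hF
        rw [fromEdgeSet_adj, Set.mem_singleton_iff, Sym2.eq_iff] at hF
        rcases hF.1 with ⟨-, rfl⟩ | ⟨rfl, -⟩
        · exact hxw rfl
        · exact hvw rfl
      exact h1.reachable.trans (hreach.mono hle)
end

section
/- Let G be a graph, S a subset of V(G), and v, w two distinct vertices not in S with vw an edge of G. Then v → w is a valid initial PSD force for S ∪ {v} if and only if w → v is a valid initial PSD force for S ∪ {w}. -/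
open SimpleGraph Set

variable {V : Type*}

lemma delVerts_walk_support {G : SimpleGraph V} {A : Set V} {a b : V}
    (p : (delVerts G A).Walk a b) (ha : a ∉ A) : ∀ x ∈ p.support, x ∉ A := by
  induction p with
  | nil => simpa using ha
  | cons h q ih =>
    intro x hx
    rcases List.mem_cons.mp (by simpa using hx) with rfl | hx
    · exact ha
    · exact ih h.2.2 x hx

lemma delVerts_mono_reach {G : SimpleGraph V} {A B : Set V} {a b : V}
    (p : (delVerts G A).Walk a b) (h : ∀ x ∈ p.support, x ∉ B) :
    (delVerts G B).Reachable a b := by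
  induction p with
  | nil => exact Reachable.refl _
  | @cons u y c hadj q ih =>
    have h1 : (delVerts G B).Adj u y := ⟨hadj.1, h u (by simp), h y (by simp)⟩
    exact h1.reachable.trans (ih fun x hx => h x (by simp [hx]))

lemma force_swap (G : SimpleGraph V) (S : Set V) (v w : V)
    (hv : v ∉ S) (hw : w ∉ S) (hvw : v ≠ w) (hadj : G.Adj v w)
    (H : ∀ x, G.Adj v x → x ∉ S ∪ {v} → (delVerts G (S ∪ {v})).Reachable x w → x = w) :
    ∀ x, G.Adj w x → x ∉ S ∪ {w} → (delVerts G (S ∪ {w})).Reachable x v → x = v := by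
  classical
  intro x hwx hxS hreach
  by_contra hxv
  have hxS' : x ∉ S ∧ x ≠ w := by
    constructor <;> intro h <;> exact hxS (by simp [h])
  obtain ⟨p0⟩ := hreach.symm
  obtain ⟨p, hp⟩ := p0.toPath
  cases p with
  | nil => exact hxv rfl
  | @cons _ y _ hvy q =>
    rw [SimpleGraph.Walk.cons_isPath_iff] at hp
    have hy : y ∉ S ∪ {w} := hvy.2.2
    have hy' : y ∉ S ∧ y ≠ w := by
      constructor <;> intro h <;> exact hy (by simp [h])
    have hsup : ∀ z ∈ q.support, z ∉ S ∪ {v} := by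
      intro z hz
      have hzA : z ∉ S ∪ {w} := delVerts_walk_support q hy z hz
      have hzv : z ≠ v := fun h => hp.2 (h ▸ hz)
      simp only [Set.mem_union, Set.mem_singleton_iff, not_or] at hzA ⊢
      exact ⟨hzA.1, hzv⟩
    have hyx : (delVerts G (S ∪ {v})).Reachable y x := delVerts_mono_reach q hsup
    have hxw : (delVerts G (S ∪ {v})).Adj x w := by
      refine ⟨hwx.symm, ?_, ?_⟩ <;>
        simp only [Set.mem_union, Set.mem_singleton_iff, not_or]
      · exact ⟨hxS'.1, hxv⟩
      · exact ⟨hw, hvw.symm⟩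
    have hyv : y ∉ S ∪ {v} := by
      simp only [Set.mem_union, Set.mem_singleton_iff, not_or]
      exact ⟨hy'.1, fun h => hp.2 (h ▸ q.start_mem_support)⟩
    exact hy'.2 (H y hvy.1 hyv (hyx.trans hxw.reachable))

/-- `v → w` is a valid initial PSD force for `S ∪ {v}` iff
`w → v` is a valid initial PSD force for `S ∪ {w}`. -/
theorem stmt1 (G : SimpleGraph V) (S : Set V) (v w : V)
    (hv : v ∉ S) (hw : w ∉ S) (hvw : v ≠ w) (hadj : G.Adj v w) :
    PSDForce G (S ∪ {v}) v w ↔ PSDForce G (S ∪ {w}) w v := by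
  constructor
  · rintro ⟨-, -, -, H⟩
    refine ⟨by simp, ?_, hadj.symm, force_swap G S v w hv hw hvw hadj H⟩
    rintro (h | h)
    · exact hv h
    · exact hvw (Set.mem_singleton_iff.mp h)
  · rintro ⟨-, -, -, H⟩
    refine ⟨by simp, ?_, hadj, force_swap G S w v hw hv hvw.symm hadj.symm H⟩
    rintro (h | h)
    · exact hw h
    · exact hvw (Set.mem_singleton_iff.mp h).symm
end

section
/- Let G be a graph of order n with a PSD forcing set B of size k such that the largest component of G − B has more than ⌈(n−k)/2⌉ vertices. Then there exists a PSD forcing set B' of size k such that the largest component of G − B' is strictly smaller than the largest component of G − B. -/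
open SimpleGraph Set

variable {V : Type*}

/-- The number of vertices in a largest component of `G - B`. -/
noncomputable def maxCompSize (G : SimpleGraph V) (B : Set V) : ℕ :=
  sSup ((fun w => (compOf G B w).ncard) '' Bᶜ)

lemma delVerts_anti (G : SimpleGraph V) {A B : Set V} (h : A ⊆ B) :
    delVerts G B ≤ delVerts G A := by
  intro a b hab
  exact ⟨hab.1, fun h' => hab.2.1 (h h'), fun h' => hab.2.2 (h h')⟩

lemma psdStep_subset (G : SimpleGraph V) (B : Set V) : B ⊆ psdStep G B :=
  Set.subset_union_left

lemma psdStep_mono (G : SimpleGraph V) {A B : Set V} (h : A ⊆ B) :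
    psdStep G A ⊆ psdStep G B := by
  intro x hx
  rcases hx with hx | ⟨u, huA, hxA, hadj, huniq⟩
  · exact Or.inl (h hx)
  · by_cases hxB : x ∈ B
    · exact Or.inl hxB
    · exact Or.inr ⟨u, h huA, hxB, hadj, fun y hy hyB hreach =>
        huniq y hy (fun hyA => hyB (h hyA)) (Reachable.mono (delVerts_anti G h) hreach)⟩

lemma psdStep_iterate_mono (G : SimpleGraph V) {A B : Set V} (h : A ⊆ B) (t : ℕ) :
    (psdStep G)^[t] A ⊆ (psdStep G)^[t] B := by
  induction t with
  | zero => exact h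
  | succ t ih =>
    rw [Function.iterate_succ_apply', Function.iterate_succ_apply']
    exact psdStep_mono G ih

lemma subset_psdStep_iterate (G : SimpleGraph V) (B : Set V) (t : ℕ) :
    B ⊆ (psdStep G)^[t] B := by
  induction t with
  | zero => exact subset_rfl
  | succ t ih =>
    rw [Function.iterate_succ_apply']
    exact ih.trans (psdStep_subset G _)

/-- Master walk lemma: with `B \ {u} ⊆ T`, `w ∈ T`, where `w` is `u`'s only neighbor in the
component `C = compOf G B w₀`, and `S ∩ C ⊆ T`, any `delVerts G T`-walk ending in `C`
stays in `C` and is a `delVerts G S`-walk. -/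
lemma master (G : SimpleGraph V) (B S T : Set V) {u w w₀ : V}
    (hT1 : B \ {u} ⊆ T) (hT2 : w ∈ T)
    (hu : ∀ z, G.Adj u z → z ∈ compOf G B w₀ → z = w)
    (hS : S ∩ compOf G B w₀ ⊆ T) :
    ∀ {y x : V}, (delVerts G T).Walk y x → x ∈ compOf G B w₀ →
      y ∈ compOf G B w₀ ∧ (delVerts G S).Reachable y x := by
  intro y x p
  induction p with
  | nil => intro hx; exact ⟨hx, Reachable.refl _⟩
  | @cons a b c h q ih =>
    intro hx
    obtain ⟨hbC, hrb⟩ := ih hx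
    obtain ⟨hab, haT, hbT⟩ := h
    have haB : a ∉ B := by
      intro haB
      have hau : a = u := by
        by_contra hne
        exact haT (hT1 ⟨haB, hne⟩)
      subst hau
      exact hbT (hu b hab hbC ▸ hT2)
    have haC : a ∈ compOf G B w₀ :=
      ⟨haB, (show (delVerts G B).Adj a b from ⟨hab, haB, hbC.1⟩).reachable.trans hbC.2⟩
    have haS : a ∉ S := fun haS => haT (hS ⟨haS, haC⟩)
    have hbS : b ∉ S := fun hbS => hbT (hS ⟨hbS, hbC⟩)
    exact ⟨haC, ((show (delVerts G S).Adj a b from ⟨hab, haS, hbS⟩).reachable).trans hrb⟩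

/-- If every vertex of the `delVerts G B`-component of `x` avoids `S`, then reachability
in `delVerts G B` transfers to `delVerts G S`. -/
lemma reach_transfer (G : SimpleGraph V) (B S : Set V) {x : V}
    (h : ∀ z, z ∉ B → (delVerts G B).Reachable z x → z ∉ S) :
    ∀ {y : V}, (delVerts G B).Walk y x → (delVerts G S).Reachable y x := by
  intro y p
  induction p with
  | nil => exact Reachable.refl _
  | @cons a b c hadj q ih =>
    obtain ⟨hab, haB, hbB⟩ := hadj
    have hbx : (delVerts G B).Reachable b c := q.reachable
    have hax : (delVerts G B).Reachable a c :=
      ((show (delVerts G B).Adj a b from ⟨hab, haB, hbB⟩).reachable).trans hbx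
    exact ((show (delVerts G S).Adj a b from ⟨hab, h a haB hax, h b hbB hbx⟩).reachable).trans (ih h)



lemma stmt4_aux_arith {a b : ℕ} (h : a / 2 < b) : a < 2 * b := by
  have := (Nat.div_lt_iff_lt_mul (by norm_num : 0 < 2)).mp h
  omega


/-- if the largest component of `G - B` has more than `⌈(n-k)/2⌉` vertices,
there is a PSD forcing set `B'` of the same size `k` whose largest component of `G - B'`
is strictly smaller. -/
theorem stmt4 [Fintype V] (G : SimpleGraph V) (B : Set V) (k : ℕ)
    (hB : IsPSDForcingSet G B) (hk : B.ncard = k)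
    (hbig : (Fintype.card V - k + 1) / 2 < maxCompSize G B) :
    ∃ B' : Set V, IsPSDForcingSet G B' ∧ B'.ncard = k ∧
      maxCompSize G B' < maxCompSize G B := by
  classical
  obtain ⟨T₀, hT₀⟩ := hB
  -- find a vertex w₀ whose component achieves the maximum size
  have himg : ((fun w => (compOf G B w).ncard) '' Bᶜ).Nonempty := by
    by_contra h
    rw [Set.not_nonempty_iff_eq_empty] at h
    rw [maxCompSize, h, csSup_empty] at hbig
    simp at hbig
  obtain ⟨w₀, hw₀B, hw₀⟩ := Nat.sSup_mem himg (Set.toFinite _).bddAbove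
  set C := compOf G B w₀ with hCdef
  have hmax : maxCompSize G B = C.ncard := by rw [maxCompSize]; exact hw₀.symm
  have hw₀C : w₀ ∈ C := ⟨hw₀B, Reachable.refl _⟩
  have hCsub : C ⊆ Bᶜ := fun x hx => hx.1
  have hc0 : 0 < C.ncard := by rw [← hmax]; omega
  -- find the first force into C
  have hex : ∃ t, ((psdStep G)^[t] B ∩ C).Nonempty :=
    ⟨T₀, w₀, ⟨by rw [hT₀]; trivial, hw₀C⟩⟩
  obtain ⟨t', hfound, hmin⟩ : ∃ t', ((psdStep G)^[t' + 1] B ∩ C).Nonempty ∧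
      ¬((psdStep G)^[t'] B ∩ C).Nonempty := by
    have hspec := Nat.find_spec hex
    have ht₀0 : Nat.find hex ≠ 0 := by
      intro h
      rw [h] at hspec
      obtain ⟨z, hzS, hzC⟩ := hspec
      exact hzC.1 hzS
    have hpos : 0 < Nat.find hex := Nat.pos_of_ne_zero ht₀0
    refine ⟨Nat.find hex - 1, ?_, Nat.find_min hex (Nat.sub_lt hpos one_pos)⟩
    have heq : Nat.find hex - 1 + 1 = Nat.find hex := Nat.succ_pred_eq_of_pos hpos
    rw [heq]
    exact hspec
  have hempty : ∀ z ∈ C, z ∉ (psdStep G)^[t'] B := fun z hz hzS => hmin ⟨z, hzS, hz⟩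
  obtain ⟨w, hwS1, hwC⟩ := hfound
  rw [Function.iterate_succ_apply'] at hwS1
  rcases hwS1 with hwS1 | ⟨u, huS, hwSno, hadj, huniq⟩
  · exact absurd hwS1 (hempty w hwC)
  have hwB : w ∉ B := hwC.1
  have huB : u ∈ B := by
    by_contra huB
    have huC : u ∈ C :=
      ⟨huB, ((show (delVerts G B).Adj u w from ⟨hadj, huB, hwB⟩).reachable).trans hwC.2⟩
    exact hempty u huC huS
  -- u's only neighbor in C is w
  have hu : ∀ z, G.Adj u z → z ∈ C → z = w := by
    intro z hz hzC
    refine huniq z hz (hempty z hzC) ?_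
    obtain ⟨p⟩ : (delVerts G B).Reachable z w := hzC.2.trans hwC.2.symm
    exact reach_transfer G B _ (fun z' hz'B hz'w => hempty z' ⟨hz'B, hz'w.trans hwC.2⟩) p
  -- the swapped set
  set B' := insert w (B \ {u}) with hB'def
  have hB'sub1 : B \ {u} ⊆ B' := Set.subset_insert _ _
  have hwB' : w ∈ B' := Set.mem_insert _ _
  have hcard : B'.ncard = k := by rw [hB'def, Set.ncard_exchange hwB huB, hk]
  have hBC : B ∩ C ⊆ B' := fun z hz => absurd hz.1 hz.2.1
  -- key invariant: the B'-process dominates the B-process inside C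
  have inv : ∀ t, ((psdStep G)^[t] B ∩ C) ∪ B' ⊆ (psdStep G)^[t] B' := by
    intro t
    induction t with
    | zero =>
      rintro x (⟨hxB, hxC⟩ | hxB')
      · exact absurd hxB hxC.1
      · exact hxB'
    | succ t ih =>
      rintro x hx
      rw [Function.iterate_succ_apply']
      rcases hx with ⟨hxS, hxC⟩ | hxB'
      · by_cases hxS' : x ∈ (psdStep G)^[t] B'
        · exact psdStep_subset G _ hxS'
        rw [Function.iterate_succ_apply'] at hxS
        rcases hxS with hxS | ⟨v, hvS, hxSno, hadjvx, huniqv⟩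
        · exact absurd (ih (Or.inl ⟨hxS, hxC⟩)) hxS'
        · have hB'S' : B' ⊆ (psdStep G)^[t] B' := fun z hz => ih (Or.inr hz)
          have hvS' : v ∈ (psdStep G)^[t] B' := by
            by_cases hvB : v ∈ B
            · have hvu : v ≠ u := by
                intro h
                subst h
                exact hxS' (hB'S' (hu x hadjvx hxC ▸ hwB'))
              exact hB'S' (hB'sub1 ⟨hvB, hvu⟩)
            · have hvC : v ∈ C :=
                ⟨hvB, ((show (delVerts G B).Adj v x from
                  ⟨hadjvx, hvB, hxC.1⟩).reachable).trans hxC.2⟩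
              exact ih (Or.inl ⟨hvS, hvC⟩)
          refine Or.inr ⟨v, hvS', hxS', hadjvx, ?_⟩
          intro y hadjvy hyS' hreach
          obtain ⟨p⟩ := hreach
          obtain ⟨hyC, hreachS⟩ := master G B ((psdStep G)^[t] B) ((psdStep G)^[t] B')
            (hB'sub1.trans hB'S') (hB'S' hwB') hu
            (fun z hz => ih (Or.inl hz)) p hxC
          have hyS : y ∉ (psdStep G)^[t] B := fun hyS => hyS' (ih (Or.inl ⟨hyS, hyC⟩))
          exact huniqv y hadjvy hyS hreachS
      · exact psdStep_subset G _ (ih (Or.inr hxB'))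
  -- B' forces: first all of C ∪ B', then u, then everything
  have hCB' : C ∪ B' ⊆ (psdStep G)^[T₀] B' := by
    rintro x (hxC | hxB')
    · exact inv T₀ (Or.inl ⟨by rw [hT₀]; trivial, hxC⟩)
    · exact inv T₀ (Or.inr hxB')
  have hBX : B ⊆ (psdStep G)^[T₀ + 1] B' := by
    rw [Function.iterate_succ_apply']
    intro b hb
    by_cases hbu : b = u
    · subst hbu
      by_cases hbS : b ∈ (psdStep G)^[T₀] B'
      · exact psdStep_subset G _ hbS
      · refine Or.inr ⟨w, hCB' (Or.inr hwB'), hbS, hadj.symm, ?_⟩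
        intro y hadjwy hyS hreach
        by_contra hne
        by_cases hyB : y ∈ B
        · exact hyS (hCB' (Or.inr (hB'sub1 ⟨hyB, hne⟩)))
        · exact hyS (hCB' (Or.inl ⟨hyB, ((show (delVerts G B).Adj y w from
            ⟨hadjwy.symm, hyB, hwB⟩).reachable).trans hwC.2⟩))
    · exact psdStep_subset G _ (hCB' (Or.inr (hB'sub1 ⟨hb, hbu⟩)))
  have hforce : IsPSDForcingSet G B' := by
    refine ⟨T₀ + (T₀ + 1), Set.eq_univ_of_univ_subset ?_⟩
    intro x _
    rw [Function.iterate_add_apply]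
    have hx : x ∈ (psdStep G)^[T₀] B := by rw [hT₀]; trivial
    exact psdStep_iterate_mono G hBX T₀ hx
  -- all components of G - B' are strictly smaller than C
  have hn := Set.ncard_add_ncard_compl B
  have hnc : Nat.card V = Fintype.card V := Nat.card_eq_fintype_card
  have hcle : C.ncard ≤ Bᶜ.ncard := Set.ncard_le_ncard hCsub (Set.toFinite _)
  have h2c : Fintype.card V - k + 1 < 2 * C.ncard := by
    rw [hmax] at hbig
    exact stmt4_aux_arith hbig
  have hkey : ∀ x, x ∉ B' → (compOf G B' x).ncard < C.ncard := by
    intro x hxB'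
    by_cases hxC : x ∈ C
    · have hsub : compOf G B' x ⊆ C \ {w} := by
        intro y hy
        obtain ⟨p⟩ := hy.2
        have hyC := (master G B B B' hB'sub1 hwB' hu hBC p hxC).1
        exact ⟨hyC, fun h => hy.1 (h ▸ hwB')⟩
      have hle := Set.ncard_le_ncard hsub (Set.toFinite _)
      rw [Set.ncard_diff_singleton_of_mem hwC] at hle
      omega
    · have hsub : compOf G B' x ⊆ (Bᶜ \ C) ∪ {u} := by
        intro y hy
        have hyC : y ∉ C := by
          intro hyC
          obtain ⟨p⟩ := hy.2.symm
          exact hxC ((master G B B B' hB'sub1 hwB' hu hBC p hyC).1)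
        by_cases hyB : y ∈ B
        · have hyu : y = u := by
            by_contra hne
            exact hy.1 (hB'sub1 ⟨hyB, hne⟩)
          exact Or.inr (by simp [hyu])
        · exact Or.inl ⟨hyB, hyC⟩
      have hle := Set.ncard_le_ncard hsub (Set.toFinite _)
      have hle2 := Set.ncard_union_le (Bᶜ \ C) {u}
      rw [Set.ncard_singleton] at hle2
      have hdiff : (Bᶜ \ C).ncard = Bᶜ.ncard - C.ncard := Set.ncard_diff hCsub (Set.toFinite _)
      omega
  refine ⟨B', hforce, hcard, ?_⟩
  rw [hmax]
  by_cases hne : ((fun w => (compOf G B' w).ncard) '' B'ᶜ).Nonempty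
  · obtain ⟨x, hxB', hx⟩ := Nat.sSup_mem hne (Set.toFinite _).bddAbove
    rw [maxCompSize, ← hx]
    exact hkey x hxB'
  · rw [Set.not_nonempty_iff_eq_empty] at hne
    rw [maxCompSize, hne, csSup_empty]
    simpa using hc0
end

section
/- Let G be a graph of order n and let k satisfy Z_+(G) ≤ k ≤ n. Then the k-PSD propagation time satisfies pt_+(G, k) ≤ ⌈(n − k)/2⌉. -/
open SimpleGraph Set

variable {V : Type*}

/-! ### Auxiliary development -/

namespace PSDAux

variable {G : SimpleGraph V}

lemma delVerts_mono {B D : Set V} (h : B ⊆ D) : delVerts G D ≤ delVerts G B := by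
  intro a b hab
  obtain ⟨h1, h2, h3⟩ := hab
  exact ⟨h1, fun ha => h2 (h ha), fun hb => h3 (h hb)⟩

lemma mem_compOf_self {B : Set V} {w : V} (hw : w ∉ B) : w ∈ compOf G B w :=
  ⟨hw, Reachable.refl w⟩

lemma compOf_disjoint {B : Set V} {w x : V} (hx : x ∈ compOf G B w) : x ∉ B := hx.1

lemma compOf_eq_of_mem {B : Set V} {x w : V} (hx : x ∈ compOf G B w) :
    compOf G B x = compOf G B w := by
  ext y
  constructor
  · rintro ⟨hy, hr⟩
    exact ⟨hy, hr.trans hx.2⟩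
  · rintro ⟨hy, hr⟩
    exact ⟨hy, hr.trans hx.2.symm⟩

lemma adj_mem_compOf {B : Set V} {w a b : V} (ha : a ∈ compOf G B w)
    (hab : G.Adj a b) (hb : b ∉ B) : b ∈ compOf G B w := by
  refine ⟨hb, Reachable.trans ?_ ha.2⟩
  exact Adj.reachable (⟨hab.symm, hb, ha.1⟩ : (delVerts G B).Adj b a)

/-- Vertices outside a component which are adjacent to it are blue. -/
lemma boundary_mem {B : Set V} {w u x : V} (hu : u ∉ compOf G B w)
    (hx : x ∈ compOf G B w) (hadj : G.Adj u x) : u ∈ B := by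
  by_contra huB
  exact hu (adj_mem_compOf hx hadj.symm huB)

/-- Closure of a predicate along walks in `G - D`. -/
lemma walk_closure {D : Set V} {P : V → Prop}
    (hstep : ∀ a b, P a → (delVerts G D).Adj a b → P b) :
    ∀ {x y : V}, (delVerts G D).Walk x y → P x → P y := by
  intro x y p
  induction p with
  | nil => exact id
  | cons h _ ih => intro hx; exact ih (hstep _ _ hx h)

lemma reachable_closure {D : Set V} {P : V → Prop}
    (hstep : ∀ a b, P a → (delVerts G D).Adj a b → P b)
    {x y : V} (hr : (delVerts G D).Reachable x y) (hx : P x) : P y := by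
  obtain ⟨p⟩ := hr
  exact walk_closure hstep p hx

/-- Transfer of reachability (used for localizing forces to a fully white component). -/
lemma reachable_transfer {D D1 : Set V} {w : V} :
    ∀ {x : V}, (delVerts G D).Walk x w →
    (∀ y, y ∉ D → (delVerts G D).Reachable y w → y ∉ D1) →
    (delVerts G D1).Reachable x w := by
  intro x p
  induction p with
  | nil => intro _; exact Reachable.refl _
  | @cons a b _ h p ih =>
      intro hsub
      obtain ⟨h1, h2, h3⟩ := h
      refine (Adj.reachable ?_).trans (ih hsub)
      exact ⟨h1, hsub a h2 ⟨Walk.cons ⟨h1, h2, h3⟩ p⟩, hsub b h3 ⟨p⟩⟩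

lemma subset_psdStep (B : Set V) : B ⊆ psdStep G B := Set.subset_union_left

lemma psdStep_mono {B B' : Set V} (h : B ⊆ B') : psdStep G B ⊆ psdStep G B' := by
  intro x hx
  by_cases hxB' : x ∈ B'
  · exact Set.mem_union_left _ hxB'
  rcases hx with hxB | hxF
  · exact absurd (h hxB) hxB'
  obtain ⟨u, hu, hxB, hadj, huniq⟩ := hxF
  refine Set.mem_union_right _ ⟨u, h hu, hxB', hadj, ?_⟩
  intro y hy hyB' hr
  exact huniq y hy (fun hyB => hyB' (h hyB)) (hr.mono (delVerts_mono h))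

lemma iterate_mono {B B' : Set V} (h : B ⊆ B') (t : ℕ) :
    (psdStep G)^[t] B ⊆ (psdStep G)^[t] B' := by
  induction t generalizing B B' with
  | zero => simpa using h
  | succ t ih =>
      rw [Function.iterate_succ_apply, Function.iterate_succ_apply]
      exact ih (psdStep_mono h)

lemma subset_iterate (B : Set V) (t : ℕ) : B ⊆ (psdStep G)^[t] B := by
  induction t with
  | zero => simp
  | succ t ih =>
      rw [Function.iterate_succ_apply']
      exact ih.trans (subset_psdStep _)

lemma iterate_mono_time {B : Set V} {a b : ℕ} (h : a ≤ b) :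
    (psdStep G)^[a] B ⊆ (psdStep G)^[b] B := by
  obtain ⟨c, rfl⟩ := Nat.exists_eq_add_of_le h
  rw [Nat.add_comm, Function.iterate_add_apply]
  exact subset_iterate _ _

lemma forcing_mono {B B' : Set V} (h : B ⊆ B') (hB : IsPSDForcingSet G B) :
    IsPSDForcingSet G B' := by
  obtain ⟨t, ht⟩ := hB
  exact ⟨t, Set.eq_univ_of_univ_subset (ht ▸ iterate_mono h t)⟩

/-- Localization: a force into a component that is entirely white at the later time `D1`
is already a valid force at the earlier time `D`. -/
lemma force_transfer {D D1 : Set V} {u w : V}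
    (hF : PSDForce G D1 u w) (hDD1 : D ⊆ D1) (hu : u ∈ D)
    (hdisj : ∀ y ∈ compOf G D w, y ∉ D1) :
    PSDForce G D u w := by
  obtain ⟨hu1, hw1, hadj, huniq⟩ := hF
  have hwD : w ∉ D := fun h => hw1 (hDD1 h)
  refine ⟨hu, hwD, hadj, ?_⟩
  intro x hxadj hxD hr
  refine huniq x hxadj (hdisj x ⟨hxD, hr⟩) ?_
  obtain ⟨p⟩ := hr
  exact reachable_transfer p (fun y hyD hyr => hdisj y ⟨hyD, hyr⟩)

/-- No-stall: if `B` is a forcing set, then at any stage, every white component admits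
a valid force into it. -/
lemma exists_force_into_comp {B : Set V} (hB : IsPSDForcingSet G B) (t : ℕ) {w : V}
    (hw : w ∉ (psdStep G)^[t] B) :
    ∃ u w1, w1 ∈ compOf G ((psdStep G)^[t] B) w ∧
      PSDForce G ((psdStep G)^[t] B) u w1 := by
  set D := (psdStep G)^[t] B with hD
  set C := compOf G D w with hC
  have hwC : w ∈ C := mem_compOf_self hw
  -- the set of extra times after which some vertex of C is blue
  set R : Set ℕ := {r | ∃ y, y ∈ C ∧ y ∈ (psdStep G)^[t + r] B} with hR
  have hRne : R.Nonempty := by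
    obtain ⟨N, hN⟩ := hB
    refine ⟨N, w, hwC, ?_⟩
    have : (psdStep G)^[N] B ⊆ (psdStep G)^[t + N] B :=
      iterate_mono_time (Nat.le_add_left _ _)
    exact this (hN ▸ Set.mem_univ w)
  set r0 := sInf R with hr0def
  have hr0 : r0 ∈ R := Nat.sInf_mem hRne
  have hr0pos : r0 ≠ 0 := by
    intro h
    obtain ⟨y, hyC, hy⟩ := hr0
    rw [h] at hy
    simp only [Nat.add_zero] at hy
    exact (hyC.1 : y ∉ D) hy
  obtain ⟨r1, hr1⟩ : ∃ r1, r0 = r1 + 1 := ⟨r0 - 1, by omega⟩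
  have hr1notR : r1 ∉ R := Nat.notMem_of_lt_sInf (by omega)
  set D1 := (psdStep G)^[t + r1] B with hD1
  have hdisj : ∀ y ∈ C, y ∉ D1 := by
    intro y hyC hyD1
    exact hr1notR ⟨y, hyC, hyD1⟩
  obtain ⟨w1, hw1C, hw1mem⟩ := hr0
  have hw1mem' : w1 ∈ psdStep G D1 := by
    have : t + r0 = (t + r1) + 1 := by omega
    rw [this, Function.iterate_succ_apply'] at hw1mem
    exact hw1mem
  have hw1D1 : w1 ∉ D1 := hdisj w1 hw1C
  obtain ⟨u1, hF⟩ : ∃ u1, PSDForce G D1 u1 w1 := by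
    rcases hw1mem' with h | h
    · exact absurd h hw1D1
    · exact h
  have hDsubD1 : D ⊆ D1 := iterate_mono_time (Nat.le_add_right _ _)
  have hu1D : u1 ∈ D := by
    refine boundary_mem (w := w) ?_ hw1C hF.2.2.1
    intro hu1C
    exact (hdisj u1 hu1C) hF.1
  have hdisj' : ∀ y ∈ compOf G D w1, y ∉ D1 := by
    rw [compOf_eq_of_mem hw1C]
    exact hdisj
  exact ⟨u1, w1, hw1C, force_transfer hF hDsubD1 hu1D hdisj'⟩

variable [Fintype V]

/-- If every component of `G - B` has at most `T` vertices, then `B` finishes in time `T`. -/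
lemma iterate_eq_univ_of_comp_bound {B : Set V} (hB : IsPSDForcingSet G B) (T : ℕ)
    (hcomp : ∀ w, w ∉ B → (compOf G B w).ncard ≤ T) :
    (psdStep G)^[T] B = Set.univ := by
  classical
  -- key counting claim
  have key : ∀ t : ℕ, ∀ w, w ∉ B →
      (compOf G B w ∩ ((psdStep G)^[t] B)ᶜ).ncard + t ≤ (compOf G B w).ncard ∨
      compOf G B w ∩ ((psdStep G)^[t] B)ᶜ = ∅ := by
    intro t
    induction t with
    | zero =>
        intro w hw
        left
        simpa using Set.ncard_le_ncard Set.inter_subset_left (Set.toFinite _)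
    | succ t ih =>
        intro w hw
        set C := compOf G B w with hC
        by_cases hemp : C ∩ ((psdStep G)^[t] B)ᶜ = ∅
        · right
          have hsub : C ∩ ((psdStep G)^[t+1] B)ᶜ ⊆ C ∩ ((psdStep G)^[t] B)ᶜ := by
            intro y hy
            exact ⟨hy.1, fun hmem => hy.2 (iterate_mono_time (Nat.le_succ t) hmem)⟩
          exact Set.subset_empty_iff.mp (hemp ▸ hsub)
        · -- pick a white vertex in C, find a force in its current component
          obtain ⟨x, hxC, hxt⟩ := Set.nonempty_iff_ne_empty.mpr hemp
          left
          obtain ⟨u, w1, hw1comp, hF⟩ := exists_force_into_comp hB t hxt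
          -- w1 belongs to C
          have hBsub : B ⊆ (psdStep G)^[t] B := subset_iterate _ _
          have hw1C : w1 ∈ C := by
            have h1 : compOf G ((psdStep G)^[t] B) x ⊆ compOf G B x := by
              intro y hy
              exact ⟨fun hyB => hy.1 (hBsub hyB), hy.2.mono (delVerts_mono hBsub)⟩
            have h2 : compOf G B x = C := compOf_eq_of_mem hxC
            exact h2 ▸ h1 hw1comp
          have hw1t : w1 ∉ (psdStep G)^[t] B := hw1comp.1
          have hw1t1 : w1 ∈ (psdStep G)^[t+1] B := by
            rw [Function.iterate_succ_apply']
            exact Set.mem_union_right _ ⟨u, hF⟩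
          -- strict decrease
          have hss : C ∩ ((psdStep G)^[t+1] B)ᶜ ⊂ C ∩ ((psdStep G)^[t] B)ᶜ := by
            constructor
            · intro y hy
              exact ⟨hy.1, fun hmem => hy.2 (iterate_mono_time (Nat.le_succ t) hmem)⟩
            · intro hsub
              have := hsub ⟨hw1C, hw1t⟩
              exact this.2 hw1t1
          have hlt := Set.ncard_lt_ncard hss (Set.toFinite _)
          rcases ih w hw with h | h
          · rw [← hC] at h; omega
          · rw [h] at hlt; simp at hlt
  -- conclude
  apply Set.eq_univ_of_forall
  intro v
  by_contra hv
  have hvB : v ∉ B := fun h => hv (subset_iterate B T h)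
  have hvC : v ∈ compOf G B v ∩ ((psdStep G)^[T] B)ᶜ := ⟨mem_compOf_self hvB, hv⟩
  rcases key T v hvB with h | h
  · have := hcomp v hvB
    have hpos : 0 < (compOf G B v ∩ ((psdStep G)^[T] B)ᶜ).ncard :=
      (Set.ncard_pos (Set.toFinite _)).mpr ⟨v, hvC⟩
    omega
  · rw [h] at hvC; exact hvC

/-- The balancing swap: if some component is too large, we can swap a boundary blue vertex
into the component and strictly decrease the maximum component size. -/
lemma balancing_step {B : Set V} (hB : IsPSDForcingSet G B) {w0 : V} (hw0 : w0 ∉ B)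
    (hbig : (Bᶜ).ncard + 2 ≤ (compOf G B w0).ncard * 2) :
    ∃ B' : Set V, IsPSDForcingSet G B' ∧ B'.ncard = B.ncard ∧
      ∀ x, x ∉ B' → (compOf G B' x).ncard + 1 ≤ (compOf G B w0).ncard := by
  classical
  set C := compOf G B w0 with hC
  set s := C.ncard with hs
  set m := (Bᶜ).ncard with hm
  -- the first force into C
  obtain ⟨u, w1, hw1C, hF⟩ := by
    have h0 : w0 ∉ (psdStep G)^[0] B := by simpa using hw0
    exact exists_force_into_comp hB 0 h0
  simp only [Function.iterate_zero_apply] at hw1C hF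
  have hw1C : w1 ∈ C := hw1C
  obtain ⟨huB, hw1B, hadj, huniq⟩ := hF
  have hne : u ≠ w1 := hadj.ne
  -- KEY-A : the only neighbor of u in C is w1
  have keyA : ∀ x, G.Adj u x → x ∈ C → x = w1 := by
    intro x hx hxC
    exact huniq x hx hxC.1 (hxC.2.trans hw1C.2.symm)
  -- KEY-B : white neighbors of any element of C are in C
  have keyB : ∀ a ∈ C, ∀ y, G.Adj a y → y ∉ B → y ∈ C := by
    intro a ha y hy hyB
    exact adj_mem_compOf ha hy hyB
  set B' : Set V := insert w1 (B \ {u}) with hB'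
  have hw1B' : w1 ∈ B' := Set.mem_insert _ _
  have huB' : u ∉ B' := by
    intro h
    rcases h with h | h
    · exact hne h
    · exact h.2 rfl
  have hmemB' : ∀ x, x ∈ B' ↔ x = w1 ∨ (x ∈ B ∧ x ≠ u) := by
    intro x
    simp [hB', Set.mem_insert_iff, Set.mem_diff]
  -- separation: walks in G - B' starting in C \ {w1} stay in C \ {w1}
  have SEP : ∀ x y : V, (x ∈ C ∧ x ≠ w1) → (delVerts G B').Reachable x y →
      y ∈ C ∧ y ≠ w1 := by
    intro x y hx hr
    refine reachable_closure (P := fun z => z ∈ C ∧ z ≠ w1) ?_ hr hx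
    rintro a b ⟨haC, haw1⟩ hab
    obtain ⟨hab1, _, hbB'⟩ := hab
    have hbw1 : b ≠ w1 := fun h => hbB' (h ▸ hw1B')
    by_cases hbB : b ∈ B
    · -- then b = u
      have hbu : b = u := by
        by_contra hbu
        exact hbB' ((hmemB' b).mpr (Or.inr ⟨hbB, hbu⟩))
      subst hbu
      exact absurd (keyA a hab1.symm haC) haw1
    · exact ⟨keyB a haC b hab1 hbB, hbw1⟩
  -- w1 forces u back at B'
  have forceback : PSDForce G B' w1 u := by
    refine ⟨hw1B', huB', hadj.symm, ?_⟩
    intro x hx hxB' hr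
    by_contra hxu
    have hxw1 : x ≠ w1 := fun h => hxB' (h ▸ hw1B')
    have hxB : x ∉ B := by
      intro hxB
      exact hxB' ((hmemB' x).mpr (Or.inr ⟨hxB, hxu⟩))
    have hxC : x ∈ C := keyB w1 hw1C x hx hxB
    have := SEP x u ⟨hxC, hxw1⟩ hr
    exact (this.1).1 huB
  -- B' is forcing
  have hstep : B ∪ {w1} ⊆ psdStep G B' := by
    intro x hx
    rcases hx with hx | hx
    · by_cases hxu : x = u
      · subst hxu
        exact Set.mem_union_right _ ⟨w1, forceback⟩
      · exact Set.mem_union_left _ ((hmemB' x).mpr (Or.inr ⟨hx, hxu⟩))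
    · rcases hx
      exact Set.mem_union_left _ hw1B'
  have hB'forcing : IsPSDForcingSet G B' := by
    obtain ⟨N, hN⟩ := hB
    refine ⟨N + 1, Set.eq_univ_of_univ_subset ?_⟩
    calc Set.univ = (psdStep G)^[N] B := hN.symm
    _ ⊆ (psdStep G)^[N] (psdStep G B') := by
        refine iterate_mono (fun x hx => hstep (Set.mem_union_left _ hx)) N
    _ = (psdStep G)^[N+1] B' := by rw [Function.iterate_succ_apply]
  -- cardinality
  have hcard : B'.ncard = B.ncard := by
    have h1 : w1 ∉ B \ {u} := fun h => hw1B h.1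
    have h2 : (B \ {u}).ncard = B.ncard - 1 := Set.ncard_diff_singleton_of_mem huB
    have h3 : B'.ncard = (B \ {u}).ncard + 1 := Set.ncard_insert_of_notMem h1 (Set.toFinite _)
    have h4 : 1 ≤ B.ncard := (Set.ncard_pos (Set.toFinite _)).mpr ⟨u, huB⟩
    omega
  refine ⟨B', hB'forcing, hcard, ?_⟩
  -- component bounds
  have hsge1 : 1 ≤ s := (Set.ncard_pos (Set.toFinite _)).mpr ⟨w1, hw1C⟩
  have hsm : s ≤ m := Set.ncard_le_ncard (fun y hy => hy.1) (Set.toFinite _)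
  intro x hxB'
  by_cases hxC : x ∈ C ∧ x ≠ w1
  · -- the component of x is inside C \ {w1}
    have hsub : compOf G B' x ⊆ C \ {w1} := by
      intro y hy
      exact SEP x y hxC hy.2.symm
    have h1 : (compOf G B' x).ncard ≤ (C \ {w1}).ncard :=
      Set.ncard_le_ncard hsub (Set.toFinite _)
    have h2 : (C \ {w1}).ncard = s - 1 := Set.ncard_diff_singleton_of_mem hw1C
    omega
  · -- the component of x avoids C \ {w1}
    have hxw1 : x ≠ w1 := fun h => hxB' (h ▸ hw1B')
    have hxnC : x ∉ C ∨ x = w1 := by tauto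
    have hxnC : x ∉ C := by
      rcases hxnC with h | h
      · exact h
      · exact absurd h hxw1
    have hsub : compOf G B' x ⊆ insert u (Bᶜ \ C) := by
      intro y hy
      by_cases hyu : y = u
      · exact hyu ▸ Set.mem_insert _ _
      have hyB' : y ∉ B' := hy.1
      have hyw1 : y ≠ w1 := fun h => hyB' (h ▸ hw1B')
      have hyB : y ∉ B := by
        intro hyB
        exact hyB' ((hmemB' y).mpr (Or.inr ⟨hyB, hyu⟩))
      have hynC : y ∉ C := by
        intro hyC
        exact hxnC (SEP y x ⟨hyC, hyw1⟩ hy.2).1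
      exact Set.mem_insert_of_mem _ ⟨hyB, hynC⟩
    have h1 : (compOf G B' x).ncard ≤ (insert u (Bᶜ \ C)).ncard :=
      Set.ncard_le_ncard hsub (Set.toFinite _)
    have h2 : (insert u (Bᶜ \ C)).ncard ≤ (Bᶜ \ C).ncard + 1 := Set.ncard_insert_le _ _
    have h3 : (Bᶜ \ C).ncard = m - s := by
      rw [hm, hs]
      exact Set.ncard_diff (fun y hy => hy.1) (Set.toFinite _)
    omega

/-- Iterated balancing to bring all components below the target size. -/
lemma balancing {k T : ℕ}
    (hT : ∀ B : Set V, B.ncard = k → (Bᶜ).ncard + 2 ≤ (T + 1) * 2) :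
    ∀ s : ℕ, ∀ B : Set V, IsPSDForcingSet G B → B.ncard = k →
    (∀ x, x ∉ B → (compOf G B x).ncard ≤ s) →
    ∃ B', IsPSDForcingSet G B' ∧ B'.ncard = k ∧
      ∀ x, x ∉ B' → (compOf G B' x).ncard ≤ T := by
  intro s
  induction s with
  | zero =>
      intro B hB hcard hcomp
      refine ⟨B, hB, hcard, fun x hx => ?_⟩
      have h1 := hcomp x hx
      have h2 : 0 < (compOf G B x).ncard :=
        (Set.ncard_pos (Set.toFinite _)).mpr ⟨x, mem_compOf_self hx⟩
      omega
  | succ s ih =>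
      intro B hB hcard hcomp
      by_cases hle : s + 1 ≤ T
      · exact ⟨B, hB, hcard, fun x hx => (hcomp x hx).trans hle⟩
      by_cases hall : ∀ x, x ∉ B → (compOf G B x).ncard ≤ s
      · exact ih B hB hcard hall
      push_neg at hall
      obtain ⟨x0, hx0B, hx0⟩ := hall
      have hx0' : (compOf G B x0).ncard = s + 1 := le_antisymm (hcomp x0 hx0B) hx0
      have hbig : (Bᶜ).ncard + 2 ≤ (compOf G B x0).ncard * 2 := by
        have := hT B hcard
        have hTs : T + 1 ≤ s + 1 := by omega
        nlinarith [hx0', this, hTs]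
      obtain ⟨B', hB', hcard', hcomp'⟩ := balancing_step hB hx0B hbig
      refine ih B' hB' (hcard' ▸ hcard) ?_
      intro x hx
      have := hcomp' x hx
      omega

end PSDAux

open PSDAux in
/-- for `Z_+(G) ≤ k ≤ n`, `pt_+(G,k) ≤ ⌈(n-k)/2⌉`. -/
theorem stmt5 [Fintype V] (G : SimpleGraph V) (k : ℕ)
    (hk1 : psdZ G ≤ k) (hk2 : k ≤ Fintype.card V) :
    psdPt G k ≤ (Fintype.card V - k + 1) / 2 := by
  classical
  set n := Fintype.card V with hn
  set T := (n - k + 1) / 2 with hT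
  -- a minimum forcing set exists
  have hne : {j | ∃ B : Set V, IsPSDForcingSet G B ∧ B.ncard = j}.Nonempty :=
    ⟨(Set.univ : Set V).ncard, Set.univ, ⟨0, by simp⟩, rfl⟩
  obtain ⟨B0, hB0, hB0card⟩ := Nat.sInf_mem hne
  -- extend it to a forcing set of size k
  have hB0k : B0.ncard ≤ k := by
    rw [hB0card]; exact hk1
  have hkuniv : k ≤ (Set.univ : Set V).ncard := by
    rw [Set.ncard_univ, Nat.card_eq_fintype_card]; exact hk2
  obtain ⟨B1, hsub, -, hB1card⟩ :=
    Set.exists_subsuperset_card_eq (n := k) (Set.subset_univ B0) hB0k hkuniv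
  have hB1 : IsPSDForcingSet G B1 := forcing_mono hsub hB0
  -- cardinality of complements of size-k sets
  have hcompl : ∀ B : Set V, B.ncard = k → (Bᶜ).ncard = n - k := by
    intro B hBcard
    have := Set.ncard_add_ncard_compl B (Set.toFinite _) (Set.toFinite _)
    rw [Nat.card_eq_fintype_card] at this
    omega
  -- balance the components
  have hTcond : ∀ B : Set V, B.ncard = k → (Bᶜ).ncard + 2 ≤ (T + 1) * 2 := by
    intro B hBcard
    rw [hcompl B hBcard, hT]
    omega
  have hinit : ∀ x, x ∉ B1 → (compOf G B1 x).ncard ≤ n := by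
    intro x _
    calc (compOf G B1 x).ncard ≤ (Set.univ : Set V).ncard :=
          Set.ncard_le_ncard (Set.subset_univ _) (Set.toFinite _)
    _ = n := by rw [Set.ncard_univ, Nat.card_eq_fintype_card]
  obtain ⟨B2, hB2, hB2card, hB2comp⟩ :=
    balancing hTcond n B1 hB1 hB1card hinit
  -- B2 finishes in time T
  have hfin : (psdStep G)^[T] B2 = Set.univ :=
    iterate_eq_univ_of_comp_bound hB2 T hB2comp
  have hpt : psdPropTime G B2 ≤ T := Nat.sInf_le hfin
  -- conclude
  have hmem : psdPropTime G B2 ∈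
      {t | ∃ B : Set V, IsPSDForcingSet G B ∧ B.ncard = k ∧ psdPropTime G B = t} :=
    ⟨B2, hB2, hB2card, rfl⟩
  exact (Nat.sInf_le hmem).trans hpt
end

section
/- Let k be a natural number. For any graph G with |V(G)| ≥ 2k + 1, pt_+(G) < |V(G)| − k. Consequently, for each fixed k there are only finitely many graphs (up to isomorphism) with pt_+(G) ≥ |V(G)| − k. -/
open SimpleGraph Set

variable {V : Type*}

namespace Stmt11Aux

variable {G : SimpleGraph V}

lemma delVerts_anti {A B : Set V} (h : A ⊆ B) : delVerts G B ≤ delVerts G A := by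
  intro a b hab
  exact ⟨hab.1, fun ha => hab.2.1 (h ha), fun hb => hab.2.2 (h hb)⟩

lemma mem_psdStep_iff {B : Set V} {y : V} :
    y ∈ psdStep G B ↔ y ∈ B ∨ ∃ u, PSDForce G B u y :=
  Set.mem_union y B {w | ∃ u, PSDForce G B u w}

lemma compOf_adj_closed {A : Set V} {v z z' : V} (hz : z ∈ compOf G A v)
    (h : (delVerts G A).Adj z z') : z' ∈ compOf G A v :=
  ⟨h.2.2, (SimpleGraph.Adj.reachable h.symm).trans hz.2⟩

lemma mem_compOf_self {A : Set V} {v : V} (hv : v ∉ A) : v ∈ compOf G A v :=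
  ⟨hv, SimpleGraph.Reachable.refl v⟩

lemma compOf_eq_of_mem {A : Set V} {v w : V} (h : w ∈ compOf G A v) :
    compOf G A w = compOf G A v := by
  ext x
  exact ⟨fun hx => ⟨hx.1, hx.2.trans h.2⟩, fun hx => ⟨hx.1, hx.2.trans h.2.symm⟩⟩

lemma compOf_anti {A B : Set V} (h : A ⊆ B) {v : V} : compOf G B v ⊆ compOf G A v :=
  fun _ hx => ⟨fun hA => hx.1 (h hA), hx.2.mono (delVerts_anti h)⟩

/-- Generic: a set closed under adjacency absorbs walks. -/
lemma walk_closed {H : SimpleGraph V} {P : Set V}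
    (hP : ∀ ⦃z z'⦄, z ∈ P → H.Adj z z' → z' ∈ P) :
    ∀ {a b : V}, H.Walk a b → a ∈ P → b ∈ P := by
  intro a b p
  induction p with
  | nil => exact id
  | cons h _ ih => exact fun ha => ih (hP ha h)

/-- Transfer of reachability inside a frozen component. -/
lemma reach_transfer {A A' : Set V} {v : V}
    (hA : ∀ z ∈ compOf G A v, z ∉ A') :
    ∀ {a b : V}, (delVerts G A).Walk a b → a ∈ compOf G A v →
      (delVerts G A').Reachable a b := by
  intro a b p
  induction p with
  | nil => exact fun _ => SimpleGraph.Reachable.refl _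
  | cons h p ih =>
    intro ha
    have hb' := compOf_adj_closed ha h
    exact (SimpleGraph.Adj.reachable (show (delVerts G A').Adj _ _ from ⟨h.1, hA _ ha, hA _ hb'⟩)).trans (ih hb')

lemma subset_psdStep (B : Set V) : B ⊆ psdStep G B := Set.subset_union_left

lemma psdStep_mono {A B : Set V} (h : A ⊆ B) : psdStep G A ⊆ psdStep G B := by
  intro y hy
  rcases mem_psdStep_iff.mp hy with hy | ⟨u, hu, hyA, hadj, huniq⟩
  · exact subset_psdStep B (h hy)
  · by_cases hyB : y ∈ B
    · exact subset_psdStep B hyB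
    · exact mem_psdStep_iff.mpr (Or.inr ⟨u, h hu, hyB, hadj,
        fun x hx hxB hr => huniq x hx (fun hxA => hxB (h hxA)) (hr.mono (delVerts_anti h))⟩)

lemma subset_iterate (B : Set V) (t : ℕ) : B ⊆ (psdStep G)^[t] B := by
  induction t with
  | zero => exact subset_rfl
  | succ t ih =>
    rw [Function.iterate_succ_apply']
    exact ih.trans (subset_psdStep _)

lemma iterate_subset_succ (B : Set V) (t : ℕ) :
    (psdStep G)^[t] B ⊆ (psdStep G)^[t + 1] B := by
  rw [Function.iterate_succ_apply']
  exact subset_psdStep _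

lemma iterate_mono {A B : Set V} (h : A ⊆ B) (t : ℕ) :
    (psdStep G)^[t] A ⊆ (psdStep G)^[t] B := by
  induction t with
  | zero => exact h
  | succ t ih =>
    rw [Function.iterate_succ_apply', Function.iterate_succ_apply']
    exact psdStep_mono ih

lemma psdStep_univ : psdStep G univ = univ :=
  subset_antisymm (Set.subset_univ _) (subset_psdStep _)

lemma iterate_univ (t : ℕ) : (psdStep G)^[t] (univ : Set V) = univ :=
  Function.iterate_fixed psdStep_univ t

lemma iterate_univ_mono {B : Set V} {t s : ℕ} (h : (psdStep G)^[t] B = univ)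
    (hts : t ≤ s) : (psdStep G)^[s] B = univ := by
  obtain ⟨d, rfl⟩ := Nat.exists_eq_add_of_le hts
  rw [Nat.add_comm, Function.iterate_add_apply, h, iterate_univ]

lemma forcing_mono {A B : Set V} (h : A ⊆ B) (hA : IsPSDForcingSet G A) :
    IsPSDForcingSet G B := by
  obtain ⟨t, ht⟩ := hA
  refine ⟨t, Set.eq_univ_of_univ_subset ?_⟩
  rw [← ht]
  exact iterate_mono h t

/-- Progress: each white component of `G - Bₜ` receives a force at round `t`. -/
lemma progress {B : Set V} (hB : IsPSDForcingSet G B) (t : ℕ) {v : V}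
    (hv : v ∉ (psdStep G)^[t] B) :
    ∃ y ∈ compOf G ((psdStep G)^[t] B) v, y ∈ (psdStep G)^[t + 1] B := by
  by_contra hno
  push_neg at hno
  set Bt := (psdStep G)^[t] B with hBt
  have hstep : (psdStep G)^[t + 1] B = psdStep G Bt :=
    Function.iterate_succ_apply' (psdStep G) t B
  have key : ∀ d, ∀ y ∈ compOf G Bt v, y ∉ (psdStep G)^[d] Bt := by
    intro d
    induction d with
    | zero => exact fun y hy => hy.1
    | succ d ih =>
      intro y hy hmem
      rw [Function.iterate_succ_apply'] at hmem
      rcases mem_psdStep_iff.mp hmem with hmem | ⟨u, hu, hyw, hadj, huniq⟩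
      · exact ih y hy hmem
      · by_cases huB : u ∈ Bt
        · have hy1 : ¬ PSDForce G Bt u y := by
            intro hf
            exact hno y hy (by rw [hstep]; exact mem_psdStep_iff.mpr (Or.inr ⟨u, hf⟩))
          have hblock : ∃ x, G.Adj u x ∧ x ∉ Bt ∧ (delVerts G Bt).Reachable x y ∧ x ≠ y := by
            by_contra hb
            push_neg at hb
            exact hy1 ⟨huB, hy.1, hadj, fun x h1 h2 h3 => hb x h1 h2 h3⟩
          obtain ⟨x, hx1, hx2, hx3, hx4⟩ := hblock
          have hxc : x ∈ compOf G Bt v := ⟨hx2, hx3.trans hy.2⟩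
          have hreach : (delVerts G ((psdStep G)^[d] Bt)).Reachable x y := by
            obtain ⟨p⟩ := hx3
            exact reach_transfer (fun z hz => ih z hz) p hxc
          exact hx4 (huniq x hx1 (ih x hxc) hreach)
        · have huc : u ∈ compOf G Bt v :=
            ⟨huB, (SimpleGraph.Adj.reachable (show (delVerts G Bt).Adj _ _ from ⟨hadj, huB, hy.1⟩)).trans hy.2⟩
          exact ih u huc hu
  obtain ⟨T, hT⟩ := hB
  have hT' : (psdStep G)^[T] Bt = univ := by
    have h2 : (psdStep G)^[T + t] B = univ := iterate_univ_mono hT (Nat.le_add_right _ _)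
    rwa [Function.iterate_add_apply] at h2
  have hvc : v ∈ compOf G Bt v := mem_compOf_self hv
  exact key T v hvc (by rw [hT']; exact Set.mem_univ v)

/-- If all components of `G - B` have at most `m` vertices then propagation
time is at most `m`. -/
lemma propTime_le [Fintype V] {B : Set V} (hB : IsPSDForcingSet G B) {m : ℕ}
    (hcomp : ∀ v ∉ B, (compOf G B v).ncard ≤ m) :
    psdPropTime G B ≤ m := by
  classical
  have main : ∀ t, ∀ v, v ∉ (psdStep G)^[t] B →
      (compOf G B v \ (psdStep G)^[t] B).ncard + t ≤ (compOf G B v).ncard := by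
    intro t
    induction t with
    | zero =>
      intro v hv
      simpa using Set.ncard_le_ncard (Set.diff_subset) (Set.toFinite _)
    | succ t ih =>
      intro v hv
      have hvt : v ∉ (psdStep G)^[t] B := fun h => hv (iterate_subset_succ B t h)
      obtain ⟨y, hyc, hy1⟩ := progress hB t hvt
      have hyY : y ∈ compOf G B v := compOf_anti (subset_iterate B t) hyc
      have hyt : y ∉ (psdStep G)^[t] B := hyc.1
      have hsub : compOf G B v \ (psdStep G)^[t + 1] B ⊆
          (compOf G B v \ (psdStep G)^[t] B) \ {y} := by
        intro x hx
        refine ⟨⟨hx.1, fun h => hx.2 (iterate_subset_succ B t h)⟩, ?_⟩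
        intro hxy
        rw [Set.mem_singleton_iff] at hxy
        subst hxy
        exact hx.2 hy1
      have h1 : (compOf G B v \ (psdStep G)^[t + 1] B).ncard ≤
          (compOf G B v \ (psdStep G)^[t] B).ncard - 1 := by
        calc (compOf G B v \ (psdStep G)^[t + 1] B).ncard
            ≤ ((compOf G B v \ (psdStep G)^[t] B) \ {y}).ncard :=
              Set.ncard_le_ncard hsub (Set.toFinite _)
          _ = (compOf G B v \ (psdStep G)^[t] B).ncard - 1 :=
              Set.ncard_diff_singleton_of_mem ⟨hyY, hyt⟩
      have h2 : 1 ≤ (compOf G B v \ (psdStep G)^[t] B).ncard := by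
        have hvB : v ∉ B := fun h => hv (subset_iterate B (t + 1) h)
        have : v ∈ compOf G B v \ (psdStep G)^[t] B := ⟨mem_compOf_self hvB, hvt⟩
        exact (Set.ncard_pos (Set.toFinite _)).mpr ⟨v, this⟩
      have h3 := ih v hvt
      omega
  have hm : (psdStep G)^[m] B = univ := by
    by_contra h
    obtain ⟨v, hv⟩ := (Set.ne_univ_iff_exists_notMem _).mp h
    have h1 := main m v hv
    have hvB : v ∉ B := fun h' => hv (subset_iterate B m h')
    have h2 := hcomp v hvB
    have h3 : 0 < (compOf G B v \ (psdStep G)^[m] B).ncard :=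
      (Set.ncard_pos (Set.toFinite _)).mpr ⟨v, mem_compOf_self hvB, hv⟩
    omega
  exact Nat.sInf_le hm

/-- Staying inside `X \ {w}` for the swapped base set. -/
lemma stay_lemma {B : Set V} {u w : V}
    (hN : ∀ x, G.Adj u x → x ∈ compOf G B w → x = w) :
    ∀ ⦃z z'⦄, z ∈ compOf G B w \ {w} →
      (delVerts G (insert w (B \ {u}))).Adj z z' → z' ∈ compOf G B w \ {w} := by
  rintro z z' ⟨hzc, hzw⟩ ⟨hzz', hz, hz'⟩
  have hz'w : z' ≠ w := fun h => hz' (h ▸ Set.mem_insert _ _)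
  have hz'u : z' ≠ u := by
    rintro rfl
    exact hzw (hN z hzz'.symm hzc)
  have hz'B : z' ∉ B := fun h => hz' (Set.mem_insert_of_mem _ ⟨h, hz'u⟩)
  exact ⟨⟨hz'B, (SimpleGraph.Adj.reachable (show (delVerts G B).Adj _ _ from ⟨hzz'.symm, hz'B, hzc.1⟩)).trans hzc.2⟩, hz'w⟩

/-- Exchange lemma: replacing `u` by its unique neighbor `w` in the component
of `w` gives another PSD forcing set. -/
lemma exchange {B : Set V} (hB : IsPSDForcingSet G B) {u w : V}
    (hu : u ∈ B) (hw : w ∉ B) (hadj : G.Adj u w)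
    (hN : ∀ x, G.Adj u x → x ∈ compOf G B w → x = w) :
    IsPSDForcingSet G (insert w (B \ {u})) := by
  set B' := insert w (B \ {u}) with hB'def
  have huB' : u ∉ B' := by
    intro h
    rcases Set.mem_insert_iff.mp h with h | h
    · exact hadj.ne h
    · exact h.2 rfl
  have hforce : PSDForce G B' w u := by
    refine ⟨Set.mem_insert _ _, huB', hadj.symm, ?_⟩
    intro x hwx hxB' hr
    by_contra hxu
    have hxw : x ≠ w := fun h => hxB' (h ▸ Set.mem_insert _ _)
    have hxB : x ∉ B := fun h => hxB' (Set.mem_insert_of_mem _ ⟨h, hxu⟩)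
    have hxc : x ∈ compOf G B w \ {w} :=
      ⟨⟨hxB, SimpleGraph.Adj.reachable (show (delVerts G B).Adj _ _ from ⟨hwx.symm, hxB, hw⟩)⟩, hxw⟩
    obtain ⟨p⟩ := hr
    exact (walk_closed (stay_lemma hN) p hxc).1.1 hu
  obtain ⟨T, hT⟩ := hB
  have hsub : B ∪ {w} ⊆ psdStep G B' := by
    rintro x (hx | hx)
    · by_cases hxu : x = u
      · subst hxu
        exact mem_psdStep_iff.mpr (Or.inr ⟨w, hforce⟩)
      · exact subset_psdStep B' (Set.mem_insert_of_mem _ ⟨hx, hxu⟩)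
    · rw [Set.mem_singleton_iff] at hx
      subst hx
      exact subset_psdStep B' (Set.mem_insert _ _)
  refine ⟨T + 1, Set.eq_univ_of_univ_subset ?_⟩
  calc (univ : Set V) = (psdStep G)^[T] B := hT.symm
    _ ⊆ (psdStep G)^[T] (B ∪ {w}) := iterate_mono Set.subset_union_left T
    _ ⊆ (psdStep G)^[T] (psdStep G B') := iterate_mono hsub T
    _ = (psdStep G)^[T + 1] B' := (Function.iterate_succ_apply (psdStep G) T B').symm

/-- Rebalancing: from any nonempty PSD forcing set one of the same size with
all components of `G - B` of size at most `n / 2`. -/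
lemma balance [Fintype V] :
    ∀ (m : ℕ) (B : Set V), IsPSDForcingSet G B → B.Nonempty →
      (∀ v ∉ B, (compOf G B v).ncard ≤ m) →
      ∃ B' : Set V, IsPSDForcingSet G B' ∧ B'.ncard = B.ncard ∧ B'.Nonempty ∧
        ∀ v ∉ B', (compOf G B' v).ncard ≤ Fintype.card V / 2 := by
  intro m
  induction m with
  | zero =>
    intro B hBf hBne hcomp
    exact ⟨B, hBf, rfl, hBne, fun v hv => le_trans (hcomp v hv) (Nat.zero_le _)⟩
  | succ m ih =>
    intro B hBf hBne hcomp
    by_cases hall : ∀ v ∉ B, (compOf G B v).ncard ≤ m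
    · exact ih B hBf hBne hall
    by_cases hsmall : m + 1 ≤ Fintype.card V / 2
    · exact ⟨B, hBf, rfl, hBne, fun v hv => le_trans (hcomp v hv) hsmall⟩
    push_neg at hall hsmall
    obtain ⟨v₀, hv₀B, hv₀c⟩ := hall
    have hmn : Fintype.card V / 2 ≤ m := by omega
    have hX : (compOf G B v₀).ncard = m + 1 := le_antisymm (hcomp v₀ hv₀B) hv₀c
    -- the first force into the component of v₀
    have hv₀' : v₀ ∉ (psdStep G)^[0] B := hv₀B
    obtain ⟨y, hyc0, hy1⟩ := progress hBf 0 hv₀'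
    have hyc : y ∈ compOf G B v₀ := by simpa using hyc0
    have hyB : y ∉ B := hyc.1
    have hy1' : y ∈ psdStep G B := by
      have := hy1
      rwa [show (0:ℕ) + 1 = 1 from rfl, Function.iterate_one] at this
    obtain ⟨u, hu, -, hadj, huniq⟩ :
        ∃ u, PSDForce G B u y := by
      rcases mem_psdStep_iff.mp hy1' with h | h
      · exact absurd h hyB
      · exact h
    have hN : ∀ x, G.Adj u x → x ∈ compOf G B y → x = y :=
      fun x h1 h2 => huniq x h1 h2.1 h2.2
    have hB'f := exchange hBf hu hyB hadj hN
    set B' := insert y (B \ {u}) with hB'def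
    have hzpos : 1 ≤ B.ncard := (Set.ncard_pos (Set.toFinite _)).mpr hBne
    have hncard : B'.ncard = B.ncard := by
      rw [hB'def, Set.ncard_insert_of_notMem (fun h => hyB h.1) (Set.toFinite _),
          Set.ncard_diff_singleton_of_mem hu]
      omega
    have hXy : compOf G B y = compOf G B v₀ := compOf_eq_of_mem hyc
    have hXycard : (compOf G B y).ncard = m + 1 := by rw [hXy, hX]
    have hBX : Disjoint B (compOf G B y) :=
      Set.disjoint_left.mpr (fun a ha hax => hax.1 ha)
    have hcard_un : (B ∪ compOf G B y).ncard = B.ncard + (m + 1) := by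
      rw [Set.ncard_union_eq hBX (Set.toFinite _) (Set.toFinite _), hXycard]
    have hle_n : (B ∪ compOf G B y).ncard ≤ Fintype.card V := by
      calc (B ∪ compOf G B y).ncard ≤ (univ : Set V).ncard :=
            Set.ncard_le_ncard (Set.subset_univ _) (Set.toFinite _)
        _ = Fintype.card V := by rw [Set.ncard_univ, Nat.card_eq_fintype_card]
    have hA2card : (insert u (univ \ (B ∪ compOf G B y))).ncard ≤ m := by
      have h1 : (insert u (univ \ (B ∪ compOf G B y))).ncard ≤
          (univ \ (B ∪ compOf G B y)).ncard + 1 := Set.ncard_insert_le _ _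
      have h2 : (univ \ (B ∪ compOf G B y)).ncard =
          Fintype.card V - (B.ncard + (m + 1)) := by
        rw [Set.ncard_diff (Set.subset_univ _), Set.ncard_univ,
            Nat.card_eq_fintype_card, hcard_un]
      omega
    have hstay := stay_lemma (G := G) hN
    have hcompB' : ∀ v ∉ B', (compOf G B' v).ncard ≤ m := by
      intro v hv
      by_cases hvX : v ∈ compOf G B y \ {y}
      · have hsub : compOf G B' v ⊆ compOf G B y \ {y} := by
          rintro x ⟨hxB', hxr⟩
          obtain ⟨p⟩ := hxr.symm
          exact walk_closed hstay p hvX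
        calc (compOf G B' v).ncard ≤ (compOf G B y \ {y}).ncard :=
              Set.ncard_le_ncard hsub (Set.toFinite _)
          _ = (m + 1) - 1 := by
              rw [Set.ncard_diff_singleton_of_mem (mem_compOf_self hyB),
                hXycard]
          _ ≤ m := le_rfl
      · have hsub : compOf G B' v ⊆ insert u (univ \ (B ∪ compOf G B y)) := by
          intro x hx
          have hxnX : x ∉ compOf G B y \ {y} := by
            intro hxX
            obtain ⟨p⟩ := hx.2
            exact hvX (walk_closed hstay p hxX)
          by_cases hxu : x = u
          · exact hxu ▸ Set.mem_insert _ _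
          · have hxB : x ∉ B := fun h => hx.1 (Set.mem_insert_of_mem _ ⟨h, hxu⟩)
            have hxX : x ∉ compOf G B y := by
              intro h
              have hxy : x = y := by
                by_contra hne
                exact hxnX ⟨h, hne⟩
              exact hx.1 (hxy ▸ Set.mem_insert _ _)
            refine Set.mem_insert_of_mem _ ⟨Set.mem_univ _, ?_⟩
            rintro (h | h)
            · exact hxB h
            · exact hxX h
        exact le_trans (Set.ncard_le_ncard hsub (Set.toFinite _)) hA2card
    have hB'ne : B'.Nonempty := ⟨y, Set.mem_insert _ _⟩
    obtain ⟨B'', h1, h2, h3, h4⟩ := ih B' hB'f hB'ne hcompB'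
    exact ⟨B'', h1, h2.trans hncard, h3, h4⟩

/-- The half bound: `pt₊(G) ≤ n / 2` for nonempty `V`. -/
lemma psdPtG_le_half [Fintype V] (G : SimpleGraph V) (hV : 1 ≤ Fintype.card V) :
    psdPtG G ≤ Fintype.card V / 2 := by
  classical
  have hne : {k | ∃ B : Set V, IsPSDForcingSet G B ∧ B.ncard = k}.Nonempty :=
    ⟨(univ : Set V).ncard, univ, ⟨0, rfl⟩, rfl⟩
  obtain ⟨B₀, hB₀f, hB₀c⟩ := Nat.sInf_mem hne
  have hB₀ne : B₀.Nonempty := by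
    rcases B₀.eq_empty_or_nonempty with h | h
    · exfalso
      obtain ⟨t, ht⟩ := hB₀f
      rw [h] at ht
      have hfix : psdStep G (∅ : Set V) = ∅ := by
        apply subset_antisymm _ (subset_psdStep _)
        intro x hx
        rcases mem_psdStep_iff.mp hx with hx | ⟨u, hu, -⟩
        · exact hx
        · exact absurd hu (Set.notMem_empty u)
      rw [Function.iterate_fixed hfix] at ht
      have : Nonempty V := Fintype.card_pos_iff.mp hV
      exact Set.empty_ne_univ ht
    · exact h
  have hinit : ∀ v ∉ B₀, (compOf G B₀ v).ncard ≤ Fintype.card V := by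
    intro v _
    calc (compOf G B₀ v).ncard ≤ (univ : Set V).ncard :=
          Set.ncard_le_ncard (Set.subset_univ _) (Set.toFinite _)
      _ = Fintype.card V := by rw [Set.ncard_univ, Nat.card_eq_fintype_card]
  obtain ⟨B, hBf, hBc, -, hBcomp⟩ := balance (Fintype.card V) B₀ hB₀f hB₀ne hinit
  have hpt : psdPropTime G B ≤ Fintype.card V / 2 := propTime_le hBf hBcomp
  refine le_trans (Nat.sInf_le ?_) hpt
  exact ⟨B, hBf, hBc.trans hB₀c, rfl⟩

end Stmt11Aux

open Stmt11Aux in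
/-- for every graph `G` with `|V(G)| ≥ 2k + 1` we have
`pt_+(G) < |V(G)| - k`; consequently only finitely many graphs satisfy
`pt_+(G) ≥ |V(G)| - k`. -/
theorem stmt11 (k : ℕ) :
    (∀ (V : Type) [Fintype V] (G : SimpleGraph V),
      2 * k + 1 ≤ Fintype.card V → psdPtG G < Fintype.card V - k) ∧
    {p : (n : ℕ) × SimpleGraph (Fin n) | p.1 - k ≤ psdPtG p.2}.Finite := by
  have part1 : ∀ (V : Type) [Fintype V] (G : SimpleGraph V),
      2 * k + 1 ≤ Fintype.card V → psdPtG G < Fintype.card V - k := by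
    intro V _ G hcard
    have h1 := psdPtG_le_half G (by omega)
    omega
  refine ⟨part1, ?_⟩
  have hfin : ∀ n : ℕ, Finite (SimpleGraph (Fin n)) := by
    intro n
    exact Finite.of_injective (fun G => G.Adj) fun a b h => SimpleGraph.ext h
  have hbig : {p : (n : ℕ) × SimpleGraph (Fin n) | p.1 ≤ 2 * k}.Finite := by
    have : {p : (n : ℕ) × SimpleGraph (Fin n) | p.1 ≤ 2 * k} ⊆
        ⋃ n ∈ Set.Iic (2 * k), (fun G => (⟨n, G⟩ : (n : ℕ) × SimpleGraph (Fin n))) ''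
          (univ : Set (SimpleGraph (Fin n))) := by
      rintro ⟨n, g⟩ hp
      exact Set.mem_biUnion hp ⟨g, Set.mem_univ _, rfl⟩
    refine Set.Finite.subset (Set.Finite.biUnion (Set.finite_Iic _) ?_) this
    intro n _
    haveI := hfin n
    exact (Set.finite_univ).image _
  refine Set.Finite.subset hbig ?_
  rintro ⟨n, g⟩ hp
  simp only [Set.mem_setOf_eq] at hp ⊢
  by_contra hn
  push_neg at hn
  have h2 : 2 * k + 1 ≤ Fintype.card (Fin n) := by simpa using hn
  have h3 := part1 (Fin n) g h2
  rw [Fintype.card_fin] at h3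
  omega
end

section
/- For any graph G on n vertices, the PSD throttling number satisfies th_+(G) ≤ ⌈(n + Z_+(G))/2⌉, and this bound is attained by the complete graph K_n for every n. -/
open SimpleGraph Set

variable {V : Type*}

attribute [reducible] delVerts

/-- The PSD throttling number `th_+(G) = min_{Z_+(G) ≤ k ≤ n} (k + pt_+(G,k))`. -/
noncomputable def psdTh [Fintype V] (G : SimpleGraph V) : ℕ :=
  sInf ((fun k => k + psdPt G k) '' Set.Icc (psdZ G) (Fintype.card V))

/-! ### Auxiliary lemmas -/

section Aux

variable {G : SimpleGraph V} {B B₁ B₂ : Set V}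

lemma delVerts_mono (h : B₁ ⊆ B₂) : delVerts G B₂ ≤ delVerts G B₁ :=
  fun _ _ ⟨hadj, ha, hb⟩ => ⟨hadj, fun hm => ha (h hm), fun hm => hb (h hm)⟩

lemma subset_psdStep : B ⊆ psdStep G B := Set.subset_union_left

lemma PSDForce.mono {u w : V} (h : B₁ ⊆ B₂) (hw : w ∉ B₂) (hf : PSDForce G B₁ u w) :
    PSDForce G B₂ u w := by
  obtain ⟨hu, _, hadj, huniq⟩ := hf
  exact ⟨h hu, hw, hadj, fun x hx hxB hr =>
    huniq x hx (fun hm => hxB (h hm)) (hr.mono (delVerts_mono h))⟩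

lemma psdStep_mono_s14 (h : B₁ ⊆ B₂) : psdStep G B₁ ⊆ psdStep G B₂ := by
  intro w hw
  rcases hw with hw | ⟨u, hf⟩
  · exact subset_psdStep (h hw)
  · by_cases hw2 : w ∈ B₂
    · exact subset_psdStep hw2
    · exact Or.inr ⟨u, hf.mono h hw2⟩

lemma psdStep_iter_mono (h : B₁ ⊆ B₂) (t : ℕ) : (psdStep G)^[t] B₁ ⊆ (psdStep G)^[t] B₂ := by
  induction t generalizing B₁ B₂ with
  | zero => exact h
  | succ t ih =>
    rw [Function.iterate_succ_apply, Function.iterate_succ_apply]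
    exact ih (psdStep_mono_s14 h)

lemma subset_psdStep_iter (t : ℕ) : B ⊆ (psdStep G)^[t] B := by
  induction t with
  | zero => exact fun _ h => h
  | succ t ih =>
    rw [Function.iterate_succ_apply']
    exact ih.trans subset_psdStep

lemma psdStep_iter_le_iter {s t : ℕ} (h : s ≤ t) :
    (psdStep G)^[s] B ⊆ (psdStep G)^[t] B := by
  obtain ⟨k, rfl⟩ := Nat.exists_eq_add_of_le h
  rw [Nat.add_comm, Function.iterate_add_apply]
  exact subset_psdStep_iter k

lemma psdStep_iter_univ (t : ℕ) : (psdStep G)^[t] (Set.univ : Set V) = Set.univ :=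
  Function.iterate_fixed (Set.univ_subset_iff.mp subset_psdStep) t

lemma IsPSDForcingSet.mono (h : B₁ ⊆ B₂) (hf : IsPSDForcingSet G B₁) :
    IsPSDForcingSet G B₂ := by
  obtain ⟨t, ht⟩ := hf
  exact ⟨t, Set.univ_subset_iff.mp (ht ▸ psdStep_iter_mono h t)⟩

/-! ### Components -/

lemma compOf_subset_compl {w : V} : compOf G B w ⊆ Bᶜ := fun _ h => h.1

lemma mem_compOf_self {w : V} (h : w ∉ B) : w ∈ compOf G B w := ⟨h, Reachable.refl w⟩

lemma mem_compOf_of_adj {w x y : V} (hx : x ∈ compOf G B w) (hy : y ∉ B)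
    (hadj : G.Adj x y) : y ∈ compOf G B w :=
  ⟨hy, (Adj.reachable (G := delVerts G B) ⟨hadj.symm, hy, hx.1⟩).trans hx.2⟩

lemma compOf_eq_of_mem {w x : V} (hx : x ∈ compOf G B w) : compOf G B x = compOf G B w := by
  ext z
  exact ⟨fun hz => ⟨hz.1, hz.2.trans hx.2⟩, fun hz => ⟨hz.1, hz.2.trans hx.2.symm⟩⟩

/-- If `S` is closed under adjacency in `H`, it is closed under reachability. -/
lemma reachable_closed {H : SimpleGraph V} {S : Set V}
    (hS : ∀ z z', z ∈ S → H.Adj z z' → z' ∈ S) :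
    ∀ {y v : V}, H.Reachable y v → y ∈ S → v ∈ S := by
  suffices h : ∀ (y v : V) (_ : H.Walk y v), y ∈ S → v ∈ S by
    intro y v r hy; obtain ⟨p⟩ := r; exact h y v p hy
  intro y v p
  induction p with
  | nil => exact id
  | cons h q ih => exact fun hy => ih (hS _ _ hy h)

/-- Transfer a reachability statement along a closed set into another graph. -/
lemma reachable_transfer {H H' : SimpleGraph V} {S : Set V}
    (hS : ∀ z z', z ∈ S → H.Adj z z' → z' ∈ S ∧ H'.Adj z z') :
    ∀ {y v : V}, H.Reachable y v → y ∈ S → H'.Reachable y v := by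
  suffices h : ∀ (y v : V) (_ : H.Walk y v), y ∈ S → H'.Reachable y v by
    intro y v r hy; obtain ⟨p⟩ := r; exact h y v p hy
  intro y v p
  induction p with
  | nil => exact fun _ => Reachable.refl _
  | cons h q ih =>
    intro hy
    obtain ⟨hmem, hadj⟩ := hS _ _ hy h
    exact (hadj.reachable).trans (ih hmem)

/-- Reachability in `G - B₁` within a component of `G - B` transfers to `G - B₂`,
provided `B₂` contains no white-in-`B₁` vertex of the component. -/
lemma reach_transfer_comp {x y : V} (hB : B ⊆ B₁)
    (hmove : ∀ z, z ∈ compOf G B x → z ∉ B₁ → z ∉ B₂)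
    (hy : y ∈ compOf G B x) (hy1 : y ∉ B₁)
    (r : (delVerts G B₁).Reachable y x) : (delVerts G B₂).Reachable y x := by
  refine reachable_transfer (S := compOf G B x ∩ B₁ᶜ) ?_ r ⟨hy, hy1⟩
  rintro z z' ⟨hzC, hz1⟩ ⟨hadj, _, hz'1⟩
  have hz'B : z' ∉ B := fun hm => hz'1 (hB hm)
  have hz'C : z' ∈ compOf G B x := mem_compOf_of_adj hzC hz'B hadj
  exact ⟨⟨hz'C, hz'1⟩, ⟨hadj, hmove z hzC hz1, hmove z' hz'C hz'1⟩⟩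

/-- Locality: a force into a component depends only on the blue trace inside it. -/
lemma force_local {x u : V} (h1 : B ⊆ B₁) (h2 : B ⊆ B₂)
    (htr : compOf G B x ∩ B₁ = compOf G B x ∩ B₂)
    (hx1 : x ∉ B₁) (hf : PSDForce G B₁ u x) : PSDForce G B₂ u x := by
  obtain ⟨hu, -, hadj, huniq⟩ := hf
  have hxB : x ∉ B := fun hm => hx1 (h1 hm)
  have hxC : x ∈ compOf G B x := mem_compOf_self hxB
  have hx2 : x ∉ B₂ := by
    intro hm
    have : x ∈ compOf G B x ∩ B₁ := htr ▸ ⟨hxC, hm⟩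
    exact hx1 this.2
  have hu2 : u ∈ B₂ := by
    by_cases huB : u ∈ B
    · exact h2 huB
    · have huC : u ∈ compOf G B x := mem_compOf_of_adj hxC huB hadj.symm
      have : u ∈ compOf G B x ∩ B₂ := htr ▸ ⟨huC, hu⟩
      exact this.2
  refine ⟨hu2, hx2, hadj, fun y hy hyB2 hr => ?_⟩
  have hyB : y ∉ B := fun hm => hyB2 (h2 hm)
  have hyC : y ∈ compOf G B x := ⟨hyB, hr.mono (delVerts_mono h2)⟩
  have hyB1 : y ∉ B₁ := by
    intro hm
    have : y ∈ compOf G B x ∩ B₂ := htr ▸ ⟨hyC, hm⟩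
    exact hyB2 this.2
  refine huniq y hy hyB1 ?_
  refine reach_transfer_comp (B₁ := B₂) (B₂ := B₁) h2 ?_ hyC hyB2 hr
  intro z hzC hz2 hz1
  have : z ∈ compOf G B x ∩ B₂ := htr ▸ ⟨hzC, hz1⟩
  exact hz2 this.2

/-- Progress: as long as `B` is a forcing set, every unfinished component receives a
force in each round. -/
lemma progress (hF : IsPSDForcingSet G B) (t : ℕ) {w : V}
    (hw : w ∉ (psdStep G)^[t] B) :
    ∃ x, x ∈ compOf G B w ∧ x ∉ (psdStep G)^[t] B ∧ x ∈ (psdStep G)^[t + 1] B := by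
  by_contra hcon
  push_neg at hcon
  have hwB : w ∉ B := fun hm => hw (subset_psdStep_iter t hm)
  have hwC : w ∈ compOf G B w := mem_compOf_self hwB
  have hsub : compOf G B w ∩ (psdStep G)^[t + 1] B ⊆ compOf G B w ∩ (psdStep G)^[t] B := by
    rintro z ⟨hzC, hz1⟩
    by_cases hz0 : z ∈ (psdStep G)^[t] B
    · exact ⟨hzC, hz0⟩
    · exact absurd hz1 (hcon z hzC hz0)
  have key : ∀ s, compOf G B w ∩ (psdStep G)^[t + s] B ⊆
      compOf G B w ∩ (psdStep G)^[t] B := by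
    intro s
    induction s with
    | zero => exact fun z hz => hz
    | succ s ih =>
      rintro z ⟨hzC, hz⟩
      rw [show t + (s + 1) = (t + s) + 1 by ring, Function.iterate_succ_apply'] at hz
      rcases hz with hz | ⟨u, hf⟩
      · exact ih ⟨hzC, hz⟩
      · -- transfer the force from time `t+s` to time `t`
        have hBle : B ⊆ (psdStep G)^[t] B := subset_psdStep_iter t
        have hBle' : B ⊆ (psdStep G)^[t + s] B := subset_psdStep_iter (t + s)
        have htr : compOf G B z ∩ (psdStep G)^[t + s] B =
            compOf G B z ∩ (psdStep G)^[t] B := by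
          rw [compOf_eq_of_mem hzC]
          refine subset_antisymm (fun a ha => ih ha) ?_
          exact fun a ⟨haC, ha⟩ => ⟨haC, psdStep_iter_le_iter (Nat.le_add_right t s) ha⟩
        have hf2 : PSDForce G ((psdStep G)^[t] B) u z :=
          force_local hBle' hBle htr hf.2.1 hf
        have hz1 : z ∈ (psdStep G)^[t + 1] B := by
          rw [Function.iterate_succ_apply']
          exact Or.inr ⟨u, hf2⟩
        exact hsub ⟨hzC, hz1⟩
  obtain ⟨T, hT⟩ := hF
  have huniv : (psdStep G)^[t + T] B = Set.univ :=
    Set.univ_subset_iff.mp (hT ▸ psdStep_iter_le_iter (Nat.le_add_left T t))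
  have : w ∈ compOf G B w ∩ (psdStep G)^[t] B := key T ⟨hwC, huniv ▸ Set.mem_univ w⟩
  exact hw this.2

/-- If all components of `G - B` have at most `m` vertices and `B` is forcing,
then `B` forces within `m` rounds. -/
lemma iter_eq_univ_of_comp_bound [Finite V] (hF : IsPSDForcingSet G B) (m : ℕ)
    (hm : ∀ w, w ∉ B → (compOf G B w).ncard ≤ m) :
    (psdStep G)^[m] B = Set.univ := by
  have count : ∀ t (w : V), w ∉ (psdStep G)^[t] B →
      (compOf G B w \ (psdStep G)^[t] B).ncard + t ≤ (compOf G B w).ncard := by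
    intro t
    induction t with
    | zero =>
      intro w _
      simpa using Set.ncard_le_ncard Set.diff_subset (Set.toFinite _)
    | succ t ih =>
      intro w hw
      have hwt : w ∉ (psdStep G)^[t] B :=
        fun hm' => hw (psdStep_iter_le_iter (Nat.le_succ t) hm')
      have hIH := ih w hwt
      obtain ⟨x, hxC, hx1, hx2⟩ := progress hF t hwt
      have hxd : x ∈ compOf G B w \ (psdStep G)^[t] B := ⟨hxC, hx1⟩
      have hsub : compOf G B w \ (psdStep G)^[t + 1] B ⊆
          (compOf G B w \ (psdStep G)^[t] B) \ {x} := by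
        rintro z ⟨hzC, hz⟩
        refine ⟨⟨hzC, fun hm' => hz (psdStep_iter_le_iter (Nat.le_succ t) hm')⟩, ?_⟩
        rintro rfl
        exact hz hx2
      have h1 : (compOf G B w \ (psdStep G)^[t + 1] B).ncard ≤
          ((compOf G B w \ (psdStep G)^[t] B) \ {x}).ncard :=
        Set.ncard_le_ncard hsub (Set.toFinite _)
      have h2 : ((compOf G B w \ (psdStep G)^[t] B) \ {x}).ncard =
          (compOf G B w \ (psdStep G)^[t] B).ncard - 1 :=
        Set.ncard_diff_singleton_of_mem hxd
      have h3 : 0 < (compOf G B w \ (psdStep G)^[t] B).ncard :=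
        (Set.ncard_pos (Set.toFinite _)).mpr ⟨x, hxd⟩
      omega
  by_contra hne
  obtain ⟨w, hw⟩ := (Set.ne_univ_iff_exists_notMem _).mp hne
  have hwB : w ∉ B := fun hm' => hw (subset_psdStep_iter m hm')
  have h1 := count m w hw
  have h2 := hm w hwB
  have h3 : w ∈ compOf G B w \ (psdStep G)^[m] B := ⟨mem_compOf_self hwB, hw⟩
  have h4 : 0 < (compOf G B w \ (psdStep G)^[m] B).ncard :=
    (Set.ncard_pos (Set.toFinite _)).mpr ⟨w, h3⟩
  omega

end Aux

section Slide

variable {G : SimpleGraph V} {B : Set V}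

/-- A forcing set has a "private door" into each component: a blue vertex `u` whose
only neighbor in the component is a single vertex `x` (namely, the first force into it). -/
lemma exists_door (hF : IsPSDForcingSet G B) {w₀ : V} (hw₀ : w₀ ∉ B) :
    ∃ u x, u ∈ B ∧ x ∈ compOf G B w₀ ∧ G.Adj u x ∧
      ∀ y, y ∈ compOf G B w₀ → G.Adj u y → y = x := by
  obtain ⟨T, hT⟩ := hF
  have hPex : ∃ t, (compOf G B w₀ ∩ (psdStep G)^[t] B).Nonempty :=
    ⟨T, w₀, mem_compOf_self hw₀, hT ▸ Set.mem_univ w₀⟩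
  classical
  set t₀ := Nat.find hPex with ht₀def
  have ht₀ : (compOf G B w₀ ∩ (psdStep G)^[t₀] B).Nonempty := Nat.find_spec hPex
  have ht₀ne : t₀ ≠ 0 := by
    intro h0
    rw [h0] at ht₀
    obtain ⟨z, hzC, hzB⟩ := ht₀
    exact hzC.1 hzB
  obtain ⟨s, hs⟩ := Nat.exists_eq_succ_of_ne_zero ht₀ne
  have hempty : compOf G B w₀ ∩ (psdStep G)^[s] B = ∅ := by
    by_contra hne
    have := Nat.find_min hPex (m := s) (by omega)
    exact this (Set.nonempty_iff_ne_empty.mpr hne)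
  obtain ⟨x, hxC, hxB⟩ := ht₀
  rw [hs, Function.iterate_succ_apply'] at hxB
  have hxs : x ∉ (psdStep G)^[s] B := fun hm =>
    (Set.eq_empty_iff_forall_notMem.mp hempty x) ⟨hxC, hm⟩
  rcases hxB with hxB | ⟨u, hf⟩
  · exact absurd hxB hxs
  have hus : u ∈ (psdStep G)^[s] B := hf.1
  have huB : u ∈ B := by
    by_contra huB
    have huC : u ∈ compOf G B w₀ := mem_compOf_of_adj hxC huB hf.2.2.1.symm
    exact (Set.eq_empty_iff_forall_notMem.mp hempty u) ⟨huC, hus⟩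
  refine ⟨u, x, huB, hxC, hf.2.2.1, fun y hyC hadj => ?_⟩
  have hys : y ∉ (psdStep G)^[s] B := fun hm =>
    (Set.eq_empty_iff_forall_notMem.mp hempty y) ⟨hyC, hm⟩
  refine hf.2.2.2 y hadj hys ?_
  -- `y` reaches `x` in `G - B`, inside the all-white component, hence also in
  -- `G - (psdStep G)^[s] B`.
  have hyCx : y ∈ compOf G B x := (compOf_eq_of_mem hxC).symm ▸ hyC
  have hr : (delVerts G B).Reachable y x := hyCx.2
  refine reach_transfer_comp (B₁ := B) (B₂ := (psdStep G)^[s] B)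
    (subset_refl B) ?_ hyCx (fun hm => hys (subset_psdStep_iter s hm)) hr
  intro z hzC _ hzs
  have hzC' : z ∈ compOf G B w₀ := (compOf_eq_of_mem hxC) ▸ hzC
  exact (Set.eq_empty_iff_forall_notMem.mp hempty z) ⟨hzC', hzs⟩

/-- The slide lemma: sliding a blue vertex through a private door keeps the set forcing,
preserves its size, and refines the big component. -/
lemma slide [Finite V] (hF : IsPSDForcingSet G B) {w₀ u x : V} (hw₀ : w₀ ∉ B)
    (huB : u ∈ B) (hxC : x ∈ compOf G B w₀) (hadj : G.Adj u x)
    (hdoor : ∀ y, y ∈ compOf G B w₀ → G.Adj u y → y = x) :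
    IsPSDForcingSet G (insert x (B \ {u})) ∧ (insert x (B \ {u})).ncard = B.ncard ∧
      ∀ w', w' ∉ insert x (B \ {u}) →
        compOf G (insert x (B \ {u})) w' ⊆ compOf G B w₀ \ {x} ∨
        compOf G (insert x (B \ {u})) w' ⊆ insert u (Bᶜ \ compOf G B w₀) := by
  classical
  set C₀ := compOf G B w₀ with hC₀
  set B' := insert x (B \ {u}) with hB'
  have hxB : x ∉ B := hxC.1
  have hxu : x ≠ u := fun h => hxB (h ▸ huB)
  have huB' : u ∉ B' := by
    intro h
    rw [hB', Set.mem_insert_iff] at h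
    rcases h with h | h
    · exact hxu h.symm
    · exact h.2 rfl
  -- Closure of `C₀ \ {x}` under adjacency in `G - B'`
  have hclosed : ∀ z z', z ∈ C₀ \ {x} → (delVerts G B').Adj z z' → z' ∈ C₀ \ {x} := by
    rintro z z' ⟨hzC, hzx⟩ ⟨hadjzz, _, hz'B'⟩
    have hz'x : z' ≠ x := fun h => hz'B' (h ▸ Set.mem_insert x _)
    have hz'u : z' ≠ u := by
      rintro rfl
      exact hzx (hdoor z hzC hadjzz.symm)
    have hz'B : z' ∉ B := by
      intro hm
      exact hz'B' (Set.mem_insert_of_mem _ ⟨hm, hz'u⟩)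
    exact ⟨mem_compOf_of_adj hzC hz'B hadjzz, hz'x⟩
  -- x can force u back
  have hforce : PSDForce G B' x u := by
    refine ⟨Set.mem_insert x _, huB', hadj.symm, fun y hy hyB' hr => ?_⟩
    by_contra hyu
    have hyB : y ∉ B := by
      intro hm
      rcases em (y = u) with rfl | hne
      · exact hyu rfl
      · exact hyB' (Set.mem_insert_of_mem _ ⟨hm, hne⟩)
    have hyx : y ≠ x := fun h => hyB' (h ▸ Set.mem_insert x _)
    have hyC : y ∈ C₀ := mem_compOf_of_adj hxC hyB hy
    have : u ∈ C₀ \ {x} := reachable_closed hclosed hr ⟨hyC, hyx⟩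
    exact this.1.1 huB
  have hsubstep : B ∪ {x} ⊆ psdStep G B' := by
    rintro z (hz | hz)
    · rcases em (z = u) with rfl | hne
      · exact Or.inr ⟨x, hforce⟩
      · exact subset_psdStep (Set.mem_insert_of_mem _ ⟨hz, hne⟩)
    · exact subset_psdStep (hz ▸ Set.mem_insert x _)
  have hF' : IsPSDForcingSet G B' := by
    obtain ⟨T, hT⟩ := hF.mono (B₂ := B ∪ {x}) Set.subset_union_left
    refine ⟨T + 1, Set.univ_subset_iff.mp ?_⟩
    rw [Function.iterate_succ_apply]
    calc Set.univ = (psdStep G)^[T] (B ∪ {x}) := hT.symm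
    _ ⊆ (psdStep G)^[T] (psdStep G B') := psdStep_iter_mono hsubstep T
  have hcard : B'.ncard = B.ncard := by
    have h1 : x ∉ B \ {u} := fun h => hxB h.1
    rw [hB', Set.ncard_insert_of_notMem h1 (Set.toFinite _),
      Set.ncard_diff_singleton_of_mem huB]
    have : 0 < B.ncard := (Set.ncard_pos (Set.toFinite _)).mpr ⟨u, huB⟩
    omega
  refine ⟨hF', hcard, fun w' hw' => ?_⟩
  rcases em (w' ∈ C₀ \ {x}) with hw's | hw's
  · left
    intro z hz
    exact reachable_closed hclosed (hz.2.symm) hw's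
  · right
    -- the other side `S₂` is also closed
    have hclosed2 : ∀ z z', z ∈ B'ᶜ \ (C₀ \ {x}) → (delVerts G B').Adj z z' →
        z' ∈ B'ᶜ \ (C₀ \ {x}) := by
      rintro z z' ⟨hzB', hzS⟩ hadjzz
      refine ⟨hadjzz.2.2, fun hz'S => hzS (hclosed z' z hz'S hadjzz.symm)⟩
    intro z hz
    have hzS : z ∈ B'ᶜ \ (C₀ \ {x}) :=
      reachable_closed hclosed2 (hz.2.symm) ⟨hw', hw's⟩
    obtain ⟨hzB', hzns⟩ := hzS
    rcases em (z = u) with h | hzu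
    · exact h ▸ Set.mem_insert _ _
    · have hzB : z ∉ B := by
        intro hm
        exact hzB' (Set.mem_insert_of_mem _ ⟨hm, hzu⟩)
      have hzx : z ≠ x := fun h => hzB' (h ▸ Set.mem_insert x _)
      have hznC : z ∉ C₀ := fun h => hzns ⟨h, hzx⟩
      exact Set.mem_insert_of_mem _ ⟨hzB, hznC⟩

end Slide

section Balance

variable {G : SimpleGraph V}

/-- By repeatedly sliding, one obtains a forcing set of the same size all of whose
components have at most `⌈d/2⌉` vertices. -/
lemma balance [Fintype V] (G : SimpleGraph V) :
    ∀ (m : ℕ) (B : Set V), IsPSDForcingSet G B →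
      (∀ w, w ∉ B → (compOf G B w).ncard ≤ m) →
      ∃ B', IsPSDForcingSet G B' ∧ B'.ncard = B.ncard ∧
        ∀ w, w ∉ B' → (compOf G B' w).ncard ≤ (Fintype.card V - B.ncard + 1) / 2 := by
  intro m
  induction m with
  | zero =>
    intro B hF h0
    exact ⟨B, hF, rfl, fun w hw => le_trans (h0 w hw) (Nat.zero_le _)⟩
  | succ m ih =>
    intro B hF hm
    by_cases hall : ∀ w, w ∉ B → (compOf G B w).ncard ≤ m
    · exact ih B hF hall
    by_cases hsmall : m + 1 ≤ (Fintype.card V - B.ncard + 1) / 2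
    · exact ⟨B, hF, rfl, fun w hw => le_trans (hm w hw) hsmall⟩
    push_neg at hall
    obtain ⟨w₀, hw₀, hbig⟩ := hall
    have hsz : (compOf G B w₀).ncard = m + 1 := le_antisymm (hm w₀ hw₀) hbig
    obtain ⟨u, x, huB, hxC, hadj, hdoor⟩ := exists_door hF hw₀
    obtain ⟨hF', hcard', hcomp'⟩ := slide hF hw₀ huB hxC hadj hdoor
    set B' := insert x (B \ {u}) with hB'
    -- arithmetic facts
    have hd : B.ncard + (Bᶜ).ncard = Fintype.card V := by
      have := Set.ncard_add_ncard_compl B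
      simpa [Nat.card_eq_fintype_card] using this
    have hCd : (compOf G B w₀).ncard ≤ (Bᶜ).ncard :=
      Set.ncard_le_ncard compOf_subset_compl (Set.toFinite _)
    have hbound : ∀ w, w ∉ B' → (compOf G B' w).ncard ≤ m := by
      intro w hw
      rcases hcomp' w hw with hsub | hsub
      · calc (compOf G B' w).ncard ≤ (compOf G B w₀ \ {x}).ncard :=
              Set.ncard_le_ncard hsub (Set.toFinite _)
          _ = (compOf G B w₀).ncard - 1 :=
              Set.ncard_diff_singleton_of_mem hxC
          _ ≤ m := by omega
      · have h1 : (compOf G B' w).ncard ≤ (insert u (Bᶜ \ compOf G B w₀)).ncard :=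
          Set.ncard_le_ncard hsub (Set.toFinite _)
        have h2 : (insert u (Bᶜ \ compOf G B w₀)).ncard ≤
            (Bᶜ \ compOf G B w₀).ncard + 1 := Set.ncard_insert_le _ _
        have h3 : (Bᶜ \ compOf G B w₀).ncard = (Bᶜ).ncard - (compOf G B w₀).ncard :=
          Set.ncard_diff compOf_subset_compl (Set.toFinite _)
        -- `¬(m+1 ≤ (d+1)/2)` gives `d ≤ 2m`
        omega
    obtain ⟨B'', hF'', hcard'', hcomp''⟩ := ih B' hF' hbound
    exact ⟨B'', hF'', hcard''.trans hcard', by rwa [hcard'] at hcomp''⟩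

end Balance

section Main1

theorem psdTh_le (V : Type) [Fintype V] (G : SimpleGraph V) :
    psdTh G ≤ (Fintype.card V + psdZ G + 1) / 2 := by
  classical
  have huniv_mem : Fintype.card V ∈ {k | ∃ B : Set V, IsPSDForcingSet G B ∧ B.ncard = k} :=
    ⟨Set.univ, ⟨0, rfl⟩, by simp [Set.ncard_univ, Nat.card_eq_fintype_card]⟩
  have hne : {k | ∃ B : Set V, IsPSDForcingSet G B ∧ B.ncard = k}.Nonempty := ⟨_, huniv_mem⟩
  have hZle : psdZ G ≤ Fintype.card V := Nat.sInf_le huniv_mem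
  obtain ⟨B₀, hF₀, hcard₀⟩ := Nat.sInf_mem hne
  have hcard₀' : B₀.ncard = psdZ G := hcard₀
  have hd : B₀.ncard + (B₀ᶜ).ncard = Fintype.card V := by
    have := Set.ncard_add_ncard_compl B₀
    simpa [Nat.card_eq_fintype_card] using this
  have hcomp : ∀ w, w ∉ B₀ → (compOf G B₀ w).ncard ≤ (B₀ᶜ).ncard := fun w _ =>
    Set.ncard_le_ncard compOf_subset_compl (Set.toFinite _)
  obtain ⟨B₁, hF₁, hcard₁, hcomp₁⟩ := balance G ((B₀ᶜ).ncard) B₀ hF₀ hcomp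
  have hpt₁ : psdPropTime G B₁ ≤ (Fintype.card V - B₀.ncard + 1) / 2 :=
    Nat.sInf_le (iter_eq_univ_of_comp_bound hF₁ _ hcomp₁)
  have hptZ : psdPt G (psdZ G) ≤ psdPropTime G B₁ :=
    Nat.sInf_le ⟨B₁, hF₁, by rw [hcard₁, hcard₀'], rfl⟩
  rw [hcard₀'] at hpt₁ hd
  have hth : psdTh G ≤ psdZ G + psdPt G (psdZ G) :=
    Nat.sInf_le ⟨psdZ G, ⟨le_refl _, hZle⟩, rfl⟩
  have : psdZ G + (Fintype.card V - psdZ G + 1) / 2 = (Fintype.card V + psdZ G + 1) / 2 := by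
    omega
  omega

end Main1

section Kn

lemma psdStep_empty {G : SimpleGraph V} : psdStep G (∅ : Set V) = ∅ := by
  apply subset_antisymm _ subset_psdStep
  rintro w (hw | ⟨u, hu, -⟩)
  · exact hw
  · exact absurd hu (Set.notMem_empty u)

lemma psdPropTime_univ {G : SimpleGraph V} : psdPropTime G (Set.univ : Set V) = 0 :=
  Nat.le_zero.mp (Nat.sInf_le (by simp))

lemma top_step_fixed {n : ℕ} {B : Set (Fin n)} (h : 1 < (Bᶜ).ncard) :
    psdStep ⊤ B = B := by
  apply subset_antisymm _ subset_psdStep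
  rintro w (hw | ⟨u, huB, hwB, hadj, huniq⟩)
  · exact hw
  exfalso
  obtain ⟨a, b, ha, hb, hab⟩ := (Set.one_lt_ncard_iff (Set.toFinite _)).mp h
  have hex : ∃ w', w' ∉ B ∧ w' ≠ w := by
    rcases em (a = w) with rfl | hne
    · exact ⟨b, hb, fun h' => hab h'.symm⟩
    · exact ⟨a, ha, hne⟩
  obtain ⟨w', hw'B, hw'w⟩ := hex
  have hadj' : (⊤ : SimpleGraph (Fin n)).Adj u w' := by
    rw [SimpleGraph.top_adj]
    rintro rfl
    exact hw'B huB
  have hreach : (delVerts ⊤ B).Reachable w' w :=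
    Adj.reachable ⟨by rw [SimpleGraph.top_adj]; exact hw'w, hw'B, hwB⟩
  exact hw'w (huniq w' hadj' hw'B hreach)

lemma top_not_forcing {n : ℕ} {B : Set (Fin n)} (h : 1 < (Bᶜ).ncard) :
    ¬ IsPSDForcingSet ⊤ B := by
  rintro ⟨t, ht⟩
  rw [Function.iterate_fixed (top_step_fixed h) t] at ht
  have : (0 : ℕ) < (Bᶜ).ncard := by omega
  obtain ⟨a, ha⟩ := (Set.ncard_pos (Set.toFinite _)).mp this
  exact ha (ht ▸ Set.mem_univ a)

lemma top_cosingleton_step {n : ℕ} (hn : 2 ≤ n) (v : Fin n) :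
    psdStep ⊤ ({v}ᶜ : Set (Fin n)) = Set.univ := by
  haveI : Nontrivial (Fin n) := Fin.nontrivial_iff_two_le.mpr hn
  apply Set.eq_univ_of_univ_subset
  intro w _
  rcases em (w = v) with rfl | hne
  · obtain ⟨u, hu⟩ := exists_ne w
    refine Or.inr ⟨u, hu, by simp, by rw [SimpleGraph.top_adj]; exact hu, ?_⟩
    intro x _ hx _
    simpa using hx
  · exact Or.inl (by simp [hne])

lemma top_cosingleton_propTime {n : ℕ} (hn : 2 ≤ n) (v : Fin n) :
    psdPropTime ⊤ ({v}ᶜ : Set (Fin n)) = 1 := by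
  have h1 : (1 : ℕ) ∈ {t | (psdStep ⊤)^[t] ({v}ᶜ : Set (Fin n)) = Set.univ} := by
    simp [top_cosingleton_step hn v]
  have hle : psdPropTime ⊤ ({v}ᶜ : Set (Fin n)) ≤ 1 := Nat.sInf_le h1
  have hne : psdPropTime ⊤ ({v}ᶜ : Set (Fin n)) ≠ 0 := by
    intro h0
    have hmem : psdPropTime ⊤ ({v}ᶜ : Set (Fin n)) ∈
        {t | (psdStep ⊤)^[t] ({v}ᶜ : Set (Fin n)) = Set.univ} := Nat.sInf_mem ⟨1, h1⟩
    rw [h0] at hmem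
    simp only [Set.mem_setOf_eq, Function.iterate_zero_apply] at hmem
    have : v ∈ ({v}ᶜ : Set (Fin n)) := hmem ▸ Set.mem_univ v
    exact this rfl
  omega

lemma top_cosingleton_ncard {n : ℕ} (v : Fin n) : ({v}ᶜ : Set (Fin n)).ncard = n - 1 := by
  have := Set.ncard_add_ncard_compl ({v} : Set (Fin n))
  simp only [Set.ncard_singleton, Nat.card_eq_fintype_card, Fintype.card_fin] at this
  omega

end Kn

section Kn2

lemma top_ncard_compl {n : ℕ} (B : Set (Fin n)) : B.ncard + (Bᶜ).ncard = n := by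
  have := Set.ncard_add_ncard_compl B
  simpa [Nat.card_eq_fintype_card] using this

lemma top_cosingleton_forcing {n : ℕ} (hn : 2 ≤ n) (v : Fin n) :
    IsPSDForcingSet ⊤ ({v}ᶜ : Set (Fin n)) :=
  ⟨1, by simp [top_cosingleton_step hn v]⟩

lemma top_psdZ {n : ℕ} (hn : 2 ≤ n) : psdZ (⊤ : SimpleGraph (Fin n)) = n - 1 := by
  have hv : 0 < n := by omega
  set v : Fin n := ⟨0, hv⟩
  have hmem : n - 1 ∈ {k | ∃ B : Set (Fin n), IsPSDForcingSet ⊤ B ∧ B.ncard = k} :=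
    ⟨{v}ᶜ, top_cosingleton_forcing hn v, top_cosingleton_ncard v⟩
  have hle : psdZ (⊤ : SimpleGraph (Fin n)) ≤ n - 1 := Nat.sInf_le hmem
  obtain ⟨B, hF, hcard⟩ := Nat.sInf_mem (⟨_, hmem⟩ :
    Set.Nonempty {k | ∃ B : Set (Fin n), IsPSDForcingSet ⊤ B ∧ B.ncard = k})
  have hcard' : B.ncard = psdZ (⊤ : SimpleGraph (Fin n)) := hcard
  have hd := top_ncard_compl B
  by_contra hne
  have hlt : B.ncard < n - 1 := by omega
  exact top_not_forcing (by omega) hF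

lemma top_psdPt_pred {n : ℕ} (hn : 2 ≤ n) :
    psdPt (⊤ : SimpleGraph (Fin n)) (n - 1) = 1 := by
  have hv : 0 < n := by omega
  set v : Fin n := ⟨0, hv⟩
  have h1 : (1 : ℕ) ∈ {t | ∃ B : Set (Fin n), IsPSDForcingSet ⊤ B ∧ B.ncard = n - 1 ∧
      psdPropTime ⊤ B = t} :=
    ⟨{v}ᶜ, top_cosingleton_forcing hn v, top_cosingleton_ncard v,
      top_cosingleton_propTime hn v⟩
  have hle : psdPt (⊤ : SimpleGraph (Fin n)) (n - 1) ≤ 1 := Nat.sInf_le h1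
  obtain ⟨B, hF, hcard, hpt⟩ := Nat.sInf_mem (⟨1, h1⟩ : Set.Nonempty
    {t | ∃ B : Set (Fin n), IsPSDForcingSet ⊤ B ∧ B.ncard = n - 1 ∧ psdPropTime ⊤ B = t})
  have hd := top_ncard_compl B
  have hc1 : (Bᶜ).ncard = 1 := by omega
  obtain ⟨w, hw⟩ := Set.ncard_eq_one.mp hc1
  have hB : B = ({w}ᶜ : Set (Fin n)) := by
    rw [← hw, compl_compl]
  rw [hB, top_cosingleton_propTime hn w] at hpt
  exact hpt.symm

lemma top_psdPt_top {n : ℕ} : psdPt (⊤ : SimpleGraph (Fin n)) n = 0 :=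
  Nat.le_zero.mp (Nat.sInf_le ⟨Set.univ, ⟨0, rfl⟩,
    by simp [Set.ncard_univ, Nat.card_eq_fintype_card], psdPropTime_univ⟩)

lemma top_psdTh {n : ℕ} (hn : 2 ≤ n) : psdTh (⊤ : SimpleGraph (Fin n)) = n := by
  have himg : ∀ y ∈ (fun k => k + psdPt (⊤ : SimpleGraph (Fin n)) k) ''
      Set.Icc (psdZ (⊤ : SimpleGraph (Fin n))) (Fintype.card (Fin n)), y = n := by
    rintro y ⟨k, ⟨hk1, hk2⟩, rfl⟩
    rw [top_psdZ hn] at hk1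
    rw [Fintype.card_fin] at hk2
    rcases em (k = n) with rfl | hne
    · show k + psdPt ⊤ k = k
      rw [top_psdPt_top]
      omega
    · have hk : k = n - 1 := by omega
      subst hk
      show n - 1 + psdPt ⊤ (n - 1) = n
      rw [top_psdPt_pred hn]
      omega
  have hmem : n ∈ (fun k => k + psdPt (⊤ : SimpleGraph (Fin n)) k) ''
      Set.Icc (psdZ (⊤ : SimpleGraph (Fin n))) (Fintype.card (Fin n)) := by
    refine ⟨n, ⟨?_, ?_⟩, by show n + psdPt ⊤ n = n; rw [top_psdPt_top]; omega⟩
    · rw [top_psdZ hn]; omega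
    · rw [Fintype.card_fin]
  have hle : psdTh (⊤ : SimpleGraph (Fin n)) ≤ n := Nat.sInf_le hmem
  have := himg _ (Nat.sInf_mem ⟨n, hmem⟩)
  exact this

lemma top_psdZ_one : psdZ (⊤ : SimpleGraph (Fin 1)) = 1 := by
  have hmem : (1 : ℕ) ∈ {k | ∃ B : Set (Fin 1), IsPSDForcingSet ⊤ B ∧ B.ncard = k} :=
    ⟨Set.univ, ⟨0, rfl⟩, by simp [Set.ncard_univ, Nat.card_eq_fintype_card]⟩
  have hle : psdZ (⊤ : SimpleGraph (Fin 1)) ≤ 1 := Nat.sInf_le hmem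
  obtain ⟨B, hF, hcard⟩ := Nat.sInf_mem (⟨_, hmem⟩ :
    Set.Nonempty {k | ∃ B : Set (Fin 1), IsPSDForcingSet ⊤ B ∧ B.ncard = k})
  have hcard' : B.ncard = psdZ (⊤ : SimpleGraph (Fin 1)) := hcard
  by_contra hne
  have h0 : B.ncard = 0 := by omega
  have hB : B = ∅ := by rwa [Set.ncard_eq_zero (Set.toFinite _)] at h0
  subst hB
  obtain ⟨t, ht⟩ := hF
  rw [Function.iterate_fixed psdStep_empty t] at ht
  have : (0 : Fin 1) ∈ (∅ : Set (Fin 1)) := ht ▸ Set.mem_univ 0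
  exact this

lemma top_psdTh_one : psdTh (⊤ : SimpleGraph (Fin 1)) = 1 := by
  have hpt : psdPt (⊤ : SimpleGraph (Fin 1)) 1 = 0 :=
    Nat.le_zero.mp (Nat.sInf_le ⟨Set.univ, ⟨0, rfl⟩,
      by simp [Set.ncard_univ, Nat.card_eq_fintype_card], psdPropTime_univ⟩)
  have himg : ∀ y ∈ (fun k => k + psdPt (⊤ : SimpleGraph (Fin 1)) k) ''
      Set.Icc (psdZ (⊤ : SimpleGraph (Fin 1))) (Fintype.card (Fin 1)), y = 1 := by
    rintro y ⟨k, ⟨hk1, hk2⟩, rfl⟩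
    rw [top_psdZ_one] at hk1
    rw [Fintype.card_fin] at hk2
    have : k = 1 := by omega
    subst this
    show 1 + psdPt ⊤ 1 = 1
    rw [hpt]
  have hmem : (1 : ℕ) ∈ (fun k => k + psdPt (⊤ : SimpleGraph (Fin 1)) k) ''
      Set.Icc (psdZ (⊤ : SimpleGraph (Fin 1))) (Fintype.card (Fin 1)) := by
    refine ⟨1, ⟨?_, ?_⟩, by show 1 + psdPt ⊤ 1 = 1; rw [hpt]⟩
    · rw [top_psdZ_one]
    · rw [Fintype.card_fin]
  exact himg _ (Nat.sInf_mem ⟨1, hmem⟩)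

end Kn2

/-- `th_+(G) ≤ ⌈(n + Z_+(G))/2⌉`, with equality for every complete
graph `K_n`. -/
theorem stmt14 :
    (∀ (V : Type) [Fintype V] (G : SimpleGraph V),
      psdTh G ≤ (Fintype.card V + psdZ G + 1) / 2) ∧
    (∀ n : ℕ, 1 ≤ n →
      psdTh (⊤ : SimpleGraph (Fin n)) =
        (Fintype.card (Fin n) + psdZ (⊤ : SimpleGraph (Fin n)) + 1) / 2) := by
  constructor
  · exact psdTh_le
  · intro n hn
    rcases em (n = 1) with rfl | hne
    · rw [top_psdTh_one, top_psdZ_one, Fintype.card_fin]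
    · have hn2 : 2 ≤ n := by omega
      rw [top_psdTh hn2, top_psdZ hn2, Fintype.card_fin]
      omega
end
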